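/- arXiv:0712.0379 — 8 statements merged into one kernel-verified Lean document; each statement's English description precedes it below -/
import Mathlib

section
/- Let m ≥ 1 be an integer. For i = 2m+1,…,3m set the nodes x_i = i(i−2m)/(2(2m+1)) ∈ ℝ (these are pairwise distinct) and values y_i = C(i, 2m+1) (ordinary binomial coefficient), and let L_m ∈ ℝ[X] be the Lagrange interpolation polynomial of degree ≤ m−1 through these m points. Then for every real number t with t ∉ {2m+1,…,3m} and t ∉ {−m,…,−1}, one has L_m(t(t−2m)/(2(2m+1))) = ( ∏_{i=2m+1}^{3m} (t−i)(t−2m+i) / (2m+1)! ) · ∑_{i=2m+1}^{3m} ( (i!)² (−1)^{i+m} / ( ((i−2m−1)!)² (3m−i)! (i+m)! ) ) · ( 1/(t−i) − 1/(t−2m+i) ). -/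
open Polynomial Finset

lemma prodIcc1 (n : ℕ) : ∏ k ∈ Finset.Icc 1 n, (k : ℝ) = (Nat.factorial n : ℝ) := by
  rw [← Nat.cast_prod]
  norm_cast
  rw [← Finset.Ico_add_one_right_eq_Icc]
  exact Finset.prod_Ico_id_eq_factorial n

lemma helperA (a i : ℕ) (ha : 1 ≤ a) (h : a ≤ i) :
    ∏ j ∈ Finset.Icc a (i - 1), ((i : ℝ) - j) = (Nat.factorial (i - a) : ℝ) := by
  rw [← prodIcc1]
  refine Finset.prod_nbij' (fun j => i - j) (fun k => i - k) ?_ ?_ ?_ ?_ ?_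
  · intro x hx; simp only [Finset.mem_Icc] at *; omega
  · intro x hx; simp only [Finset.mem_Icc] at *; omega
  · intro x hx; simp only [Finset.mem_Icc] at *; omega
  · intro x hx; simp only [Finset.mem_Icc] at *; omega
  · intro x hx
    simp only [Finset.mem_Icc] at hx
    have : x ≤ i := by omega
    push_cast [Nat.cast_sub this]
    ring

lemma helperB (i b : ℕ) : ∏ j ∈ Finset.Icc (i + 1) b, ((i : ℝ) - j)
    = (-1 : ℝ) ^ (b - i) * (Nat.factorial (b - i) : ℝ) := by
  have h1 : ∏ j ∈ Finset.Icc (i + 1) b, ((i : ℝ) - j)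
      = ∏ j ∈ Finset.Icc (i + 1) b, (-1 : ℝ) * ((j : ℝ) - i) := by
    apply Finset.prod_congr rfl; intro x hx; ring
  rw [h1, Finset.prod_mul_distrib, Finset.prod_const, Nat.card_Icc]
  have h2 : b + 1 - (i + 1) = b - i := by omega
  rw [h2]
  congr 1
  rw [← prodIcc1]
  refine Finset.prod_nbij' (fun j => j - i) (fun k => k + i) ?_ ?_ ?_ ?_ ?_
  · intro x hx; simp only [Finset.mem_Icc] at *; omega
  · intro x hx; simp only [Finset.mem_Icc] at *; omega
  · intro x hx; simp only [Finset.mem_Icc] at *; omega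
  · intro x hx; simp only [Finset.mem_Icc] at *; omega
  · intro x hx
    simp only [Finset.mem_Icc] at hx
    have : i ≤ x := by omega
    push_cast [Nat.cast_sub this]
    ring

lemma factIcc (a b : ℕ) (h : a ≤ b) :
    (Nat.factorial a) * ∏ k ∈ Finset.Icc (a + 1) b, k = Nat.factorial b := by
  induction b, h using Nat.le_induction with
  | base => simp
  | succ n hn ih =>
      rw [Finset.prod_Icc_succ_top (by omega), ← mul_assoc, ih, Nat.factorial_succ, mul_comm]

lemma helperC (m i : ℕ) (h2 : 2 * m + 1 ≤ i) :
    ∏ j ∈ Finset.Icc (2 * m + 1) (3 * m), ((i : ℝ) + j - 2 * m)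
      = (Nat.factorial (i + m) : ℝ) / (Nat.factorial i : ℝ) := by
  have key : ∏ j ∈ Finset.Icc (2 * m + 1) (3 * m), ((i : ℝ) + j - 2 * m)
      = ∏ k ∈ Finset.Icc (i + 1) (i + m), (k : ℝ) := by
    refine Finset.prod_nbij' (fun j => i + j - 2 * m) (fun k => k + 2 * m - i) ?_ ?_ ?_ ?_ ?_
    · intro x hx; simp only [Finset.mem_Icc] at *; omega
    · intro x hx; simp only [Finset.mem_Icc] at *; omega
    · intro x hx; simp only [Finset.mem_Icc] at *; omega
    · intro x hx; simp only [Finset.mem_Icc] at *; omega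
    · intro x hx
      simp only [Finset.mem_Icc] at hx
      have : 2 * m ≤ i + x := by omega
      push_cast [Nat.cast_sub this]
      ring
  rw [key, eq_div_iff (by positivity)]
  rw [← Nat.cast_prod, ← Nat.cast_mul, mul_comm, factIcc i (i + m) (by omega)]

/-- Explicit formula for the Lagrange interpolation polynomial `L_m`
(the unique real polynomial of degree ≤ m-1) through the points
`(i(i-2m)/(2(2m+1)), C(i,2m+1))`, `i = 2m+1, …, 3m`, evaluated at `t(t-2m)/(2(2m+1))`. -/
theorem stmt_1 (m : ℕ) (hm : 1 ≤ m) (L : Polynomial ℝ)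
    (hdeg : L.degree ≤ ((m - 1 : ℕ) : WithBot ℕ))
    (hinterp : ∀ i ∈ Finset.Icc (2 * m + 1) (3 * m),
      L.eval ((i : ℝ) * ((i : ℝ) - 2 * m) / (2 * (2 * m + 1)))
        = (Nat.choose i (2 * m + 1) : ℝ))
    (t : ℝ)
    (ht : ∀ i ∈ Finset.Icc (2 * m + 1) (3 * m), t ≠ (i : ℝ) ∧ t ≠ 2 * m - (i : ℝ)) :
    L.eval (t * (t - 2 * m) / (2 * (2 * m + 1)))
      = ((∏ i ∈ Finset.Icc (2 * m + 1) (3 * m), (t - (i : ℝ)) * (t - 2 * m + (i : ℝ)))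
          / (Nat.factorial (2 * m + 1) : ℝ))
        * ∑ i ∈ Finset.Icc (2 * m + 1) (3 * m),
            ((Nat.factorial i : ℝ) ^ 2 * (-1 : ℝ) ^ (i + m)
              / ((Nat.factorial (i - (2 * m + 1)) : ℝ) ^ 2
                  * (Nat.factorial (3 * m - i) : ℝ) * (Nat.factorial (i + m) : ℝ)))
            * (1 / (t - (i : ℝ)) - 1 / (t - 2 * m + (i : ℝ))) := by
  classical
  set s := Finset.Icc (2 * m + 1) (3 * m) with hs
  set v : ℕ → ℝ := fun i => (i : ℝ) * ((i : ℝ) - 2 * m) / (2 * (2 * m + 1)) with hv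
  have hD : (2 * (2 * (m : ℝ) + 1)) ≠ 0 := by positivity
  have hvdiff : ∀ i j : ℕ,
      v i - v j = (((i : ℝ) - j) * ((i : ℝ) + j - 2 * m)) / (2 * (2 * m + 1)) := by
    intro i j
    simp only [hv]
    field_simp
    ring
  have hmem : ∀ i ∈ s, 2 * m + 1 ≤ i ∧ i ≤ 3 * m := by
    intro i hi; simpa [hs, Finset.mem_Icc] using hi
  have hinj : Set.InjOn v s := by
    intro a ha b hb hab
    simp only [hs, Finset.coe_Icc, Set.mem_Icc] at ha hb
    have h0 : ((a : ℝ) - b) * ((a : ℝ) + b - 2 * m) = 0 := by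
      have h := hvdiff a b
      rw [hab, sub_self] at h
      have := h.symm
      rwa [_root_.div_eq_zero_iff, or_iff_left hD] at this
    rcases mul_eq_zero.mp h0 with h | h
    · have : (a : ℝ) = b := by linarith
      exact_mod_cast this
    · exfalso
      have ha' : (2 * m + 1 : ℝ) ≤ a := by exact_mod_cast ha.1
      have hb' : (2 * m + 1 : ℝ) ≤ b := by exact_mod_cast hb.1
      linarith
  have hcard : s.card = m := by rw [hs, Nat.card_Icc]; omega
  have hdeg2 : L.degree < (s.card : WithBot ℕ) := by
    refine lt_of_le_of_lt hdeg ?_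
    rw [hcard]
    exact_mod_cast Nat.sub_lt hm one_pos
  have hL : L = Lagrange.interpolate s v (fun i => (Nat.choose i (2 * m + 1) : ℝ)) :=
    Lagrange.eq_interpolate_of_eval_eq (v := v) _ hinj hdeg2 hinterp
  set u := t * (t - 2 * m) / (2 * (2 * m + 1)) with hu
  have husub : ∀ j : ℕ, u - v j = ((t - j) * (t - 2 * m + j)) / (2 * (2 * m + 1)) := by
    intro j
    simp only [hu, hv]
    field_simp
    ring
  rw [hL, Lagrange.interpolate_apply, Polynomial.eval_finset_sum, Finset.mul_sum]
  refine Finset.sum_congr rfl ?_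
  intro i hi
  obtain ⟨hi1, hi2⟩ := hmem i hi
  obtain ⟨hti, hti2⟩ := ht i hi
  have htsub : t - (i : ℝ) ≠ 0 := sub_ne_zero.mpr hti
  have htsub2 : t - 2 * m + (i : ℝ) ≠ 0 := by
    intro h; apply hti2; linarith
  -- evaluate basis
  simp only [Polynomial.eval_mul, Polynomial.eval_C, Lagrange.basis, Polynomial.eval_prod,
    Lagrange.basisDivisor, Polynomial.eval_mul, Polynomial.eval_C, Polynomial.eval_sub,
    Polynomial.eval_X]
  have hfac : ∀ j ∈ s.erase i, (v i - v j)⁻¹ * (u - v j)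
      = ((t - j) * (t - 2 * m + j)) / (((i : ℝ) - j) * ((i : ℝ) + j - 2 * m)) := by
    intro j hj
    obtain ⟨hji, hjs⟩ := Finset.mem_erase.mp hj
    obtain ⟨hj1, hj2⟩ := hmem j hjs
    have hij : ((i : ℝ) - j) ≠ 0 := by
      intro h
      apply hji
      have : (j : ℝ) = i := by linarith
      exact_mod_cast this
    have hij2 : ((i : ℝ) + j - 2 * m) ≠ 0 := by
      have h1 : (2 * m + 1 : ℝ) ≤ i := by exact_mod_cast hi1
      have h2 : (2 * m + 1 : ℝ) ≤ j := by exact_mod_cast hj1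
      intro h; nlinarith
    rw [hvdiff, husub]
    field_simp
  have hprod : ∏ j ∈ s.erase i, ((v i - v j)⁻¹ * (u - v j))
      = ∏ j ∈ s.erase i, (((t - (j : ℝ)) * (t - 2 * m + j))
          / (((i : ℝ) - j) * ((i : ℝ) + j - 2 * m))) := Finset.prod_congr rfl hfac
  rw [hprod, Finset.prod_div_distrib]
  have hnum : ∏ j ∈ s.erase i, ((t - (j : ℝ)) * (t - 2 * m + j))
      = (∏ j ∈ s, ((t - (j : ℝ)) * (t - 2 * m + j))) / ((t - i) * (t - 2 * m + i)) := by
    rw [eq_div_iff (mul_ne_zero htsub htsub2), mul_comm]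
    exact Finset.mul_prod_erase s (fun j => (t - (j : ℝ)) * (t - 2 * m + j)) hi
  have herase : s.erase i = Finset.Icc (2 * m + 1) (i - 1) ∪ Finset.Icc (i + 1) (3 * m) := by
    ext j
    simp only [hs, Finset.mem_erase, Finset.mem_union, Finset.mem_Icc]
    omega
  have hdisj : Disjoint (Finset.Icc (2 * m + 1) (i - 1)) (Finset.Icc (i + 1) (3 * m)) := by
    rw [Finset.disjoint_left]
    intro x hx hx2
    simp only [Finset.mem_Icc] at hx hx2
    omega
  have hP2 : ∏ j ∈ s.erase i, ((i : ℝ) - j)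
      = (Nat.factorial (i - (2 * m + 1)) : ℝ)
        * ((-1 : ℝ) ^ (3 * m - i) * (Nat.factorial (3 * m - i) : ℝ)) := by
    rw [herase, Finset.prod_union hdisj, helperA _ _ (by omega) (by omega), helperB]
  have h2i : ((i : ℝ) + i - 2 * m) ≠ 0 := by
    have : (2 * m + 1 : ℝ) ≤ i := by exact_mod_cast hi1
    intro h; linarith
  have hP3 : ∏ j ∈ s.erase i, ((i : ℝ) + j - 2 * m)
      = ((Nat.factorial (i + m) : ℝ) / (Nat.factorial i : ℝ)) / ((i : ℝ) + i - 2 * m) := by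
    rw [eq_div_iff h2i, ← helperC m i hi1, ← hs, mul_comm]
    exact Finset.mul_prod_erase s (fun j => (i : ℝ) + j - 2 * m) hi
  have hden : ∏ j ∈ s.erase i, (((i : ℝ) - j) * ((i : ℝ) + j - 2 * m))
      = (∏ j ∈ s.erase i, ((i : ℝ) - j)) * ∏ j ∈ s.erase i, ((i : ℝ) + j - 2 * m) :=
    Finset.prod_mul_distrib
  rw [hden, hnum, hP2, hP3]
  have hsign : (-1 : ℝ) ^ (3 * m - i) = (-1 : ℝ) ^ (i + m) := by
    have h4 : (3 * m - i) + (i + m) = 4 * m := by omega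
    have e1 : (-1 : ℝ) ^ (3 * m - i) * (-1 : ℝ) ^ (i + m) = 1 := by
      rw [← pow_add, h4, pow_mul]; norm_num
    have e2 : (-1 : ℝ) ^ (i + m) * (-1 : ℝ) ^ (i + m) = 1 := by
      rw [← pow_add, ← two_mul, pow_mul]; norm_num
    calc (-1 : ℝ) ^ (3 * m - i)
        = (-1 : ℝ) ^ (3 * m - i) * ((-1 : ℝ) ^ (i + m) * (-1 : ℝ) ^ (i + m)) := by
          rw [e2, mul_one]
      _ = ((-1 : ℝ) ^ (3 * m - i) * (-1 : ℝ) ^ (i + m)) * (-1 : ℝ) ^ (i + m) := by ring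
      _ = (-1 : ℝ) ^ (i + m) := by rw [e1, one_mul]
  rw [hsign]
  have hf1 : (Nat.factorial i : ℝ) ≠ 0 := by positivity
  have hf2 : (Nat.factorial (2 * m + 1) : ℝ) ≠ 0 := by positivity
  have hf3 : (Nat.factorial (i - (2 * m + 1)) : ℝ) ≠ 0 := by positivity
  have hf4 : (Nat.factorial (3 * m - i) : ℝ) ≠ 0 := by positivity
  have hf5 : (Nat.factorial (i + m) : ℝ) ≠ 0 := by positivity
  have hneg : ((-1 : ℝ) ^ (i + m)) ≠ 0 := pow_ne_zero _ (by norm_num)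
  have hch : (Nat.choose i (2 * m + 1) : ℝ)
      = (Nat.factorial i : ℝ)
        / ((Nat.factorial (2 * m + 1) : ℝ) * (Nat.factorial (i - (2 * m + 1)) : ℝ)) := by
    rw [eq_div_iff (mul_ne_zero hf2 hf3), ← mul_assoc]
    exact_mod_cast Nat.choose_mul_factorial_mul_factorial hi1
  rw [hch]
  rcases Nat.even_or_odd (i + m) with hpar | hpar
  · rw [Even.neg_one_pow hpar]
    field_simp
    ring
  · rw [Odd.neg_one_pow hpar]
    field_simp
    ring
end

section
/- Let m ≥ 1 be an integer. For every rational number t, ∑_{k=0}^{2m} (−1)^k C(2m,k) · Ch(t, 4m+1−k) · Ch(t, 2m+1+k) = ( (−1)^m C(2m,m) / C(4m+1,m) ) · Ch(t, 3m+1) · Ch(t+m, 3m+1), where C(n,k) denotes the ordinary binomial coefficient and Ch(x,r) the generalized binomial coefficient. -/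
open Finset

/-- Generalized binomial coefficient `Ch(x,r) = x(x-1)⋯(x-r+1)/r!`. -/
def gch (x : ℚ) (r : ℕ) : ℚ :=
  (∏ j ∈ Finset.range r, (x - (j : ℚ))) / (Nat.factorial r : ℚ)

lemma gch_zero (x : ℚ) : gch x 0 = 1 := by simp [gch]

lemma gch_succ (x : ℚ) (r : ℕ) :
    gch x (r+1) * ((r : ℚ) + 1) = gch x r * (x - (r : ℚ)) := by
  have h1 : (Nat.factorial (r+1) : ℚ) = ((r : ℚ)+1) * (Nat.factorial r : ℚ) := by
    rw [Nat.factorial_succ]; push_cast; ring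
  have h2 : (Nat.factorial r : ℚ) ≠ 0 := by
    exact_mod_cast (Nat.factorial_pos r).ne'
  have h3 : ((r:ℚ)+1) ≠ 0 := by positivity
  simp only [gch, Finset.prod_range_succ, h1]
  field_simp

lemma gch_shift (x : ℚ) (r : ℕ) :
    gch (x+1) r * (x + 1 - (r : ℚ)) = (x+1) * gch x r := by
  have key : (∏ j ∈ Finset.range r, (x + 1 - (j:ℚ))) * (x + 1 - (r : ℚ))
      = (x+1) * ∏ j ∈ Finset.range r, (x - (j:ℚ)) := by
    have h1 := Finset.prod_range_succ (fun j => (x + 1 - (j:ℚ))) r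
    have h2 := Finset.prod_range_succ' (fun j => (x + 1 - (j:ℚ))) r
    rw [h1] at h2
    rw [h2]
    have h3 : ∀ j ∈ Finset.range r, (x + 1 - ((j+1 : ℕ):ℚ)) = x - (j:ℚ) := by
      intro j _; push_cast; ring
    rw [Finset.prod_congr rfl h3]
    push_cast
    ring
  have h2 : (Nat.factorial r : ℚ) ≠ 0 := by
    exact_mod_cast (Nat.factorial_pos r).ne'
  simp only [gch]
  field_simp
  linear_combination key

lemma gch_shift_succ (x : ℚ) (r : ℕ) :
    gch (x+1) (r+1) * ((r : ℚ) + 1) = (x+1) * gch x r := by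
  have h1 := gch_succ (x+1) r
  have h2 := gch_shift x r
  have h3 : ((r:ℚ)+1) ≠ 0 := by positivity
  -- gch (x+1) (r+1) * (r+1) = gch (x+1) r * (x+1-r)
  -- and gch (x+1) r * (x+1-r) = (x+1) * gch x r
  rw [h1, h2]

lemma gch_natCast (n r : ℕ) : gch (n : ℚ) r = (Nat.choose n r : ℚ) := by
  induction r with
  | zero => simp [gch_zero]
  | succ r ih =>
    have h := gch_succ (n : ℚ) r
    rw [ih] at h
    have h3 : ((r:ℚ)+1) ≠ 0 := by positivity
    have key : (Nat.choose n (r+1) : ℚ) * ((r:ℚ)+1)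
        = (Nat.choose n r : ℚ) * ((n:ℚ) - (r:ℚ)) := by
      rcases Nat.lt_or_ge r n with hlt | hge
      · have hc := Nat.choose_succ_right_eq n r
        have hcast : ((n - r : ℕ) : ℚ) = (n:ℚ) - (r:ℚ) := by
          rw [Nat.cast_sub hlt.le]
        calc (Nat.choose n (r+1) : ℚ) * ((r:ℚ)+1)
            = ((Nat.choose n (r+1) * (r+1) : ℕ) : ℚ) := by push_cast; ring
          _ = ((Nat.choose n r * (n - r) : ℕ) : ℚ) := by rw [hc]
          _ = (Nat.choose n r : ℚ) * ((n:ℚ) - (r:ℚ)) := by push_cast [Nat.cast_sub hlt.le]; ring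
      · rcases eq_or_lt_of_le hge with he | hlt2
        · subst he
          simp [Nat.choose_succ_self]
        · rw [Nat.choose_eq_zero_of_lt (by omega), Nat.choose_eq_zero_of_lt hlt2]
          simp
    have := h.trans key.symm
    exact mul_right_cancel₀ h3 this

/-- partial sum function `S`. -/
def Sm (m : ℕ) (t : ℚ) : ℚ :=
  ∑ k ∈ Finset.range (2 * m + 1),
    (-1 : ℚ) ^ k * (Nat.choose (2 * m) k : ℚ)
      * gch t (4 * m + 1 - k) * gch t (2 * m + 1 + k)

/-- the RHS function. -/
def Rm (m : ℕ) (t : ℚ) : ℚ :=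
  ((-1 : ℚ) ^ m * (Nat.choose (2 * m) m : ℚ) / (Nat.choose (4 * m + 1) m : ℚ))
    * gch t (3 * m + 1) * gch (t + m) (3 * m + 1)

/-- WZ certificate. -/
def gcert (m : ℕ) (t : ℚ) (k : ℕ) : ℚ :=
  -(t+1) * ((k:ℚ)/2) * (-1:ℚ)^k * (Nat.choose (2*m) k : ℚ)
    * gch t (4*m+1-k) * gch t (2*m+k)

lemma S_rec (m : ℕ) (t : ℚ) :
    (t - 3*m) * (t - 2*m) * Sm m (t+1) = (t+1) * (t + m + 1) * Sm m t := by
  have key : ∀ k ∈ Finset.range (2*m+1),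
      (t - 3*m) * (t - 2*m) * ((-1:ℚ)^k * (Nat.choose (2*m) k : ℚ)
          * gch (t+1) (4*m+1-k) * gch (t+1) (2*m+1+k))
      - (t+1) * (t + m + 1) * ((-1:ℚ)^k * (Nat.choose (2*m) k : ℚ)
          * gch t (4*m+1-k) * gch t (2*m+1+k))
      = gcert m t (k+1) - gcert m t k := by
    intro k hk
    rw [Finset.mem_range] at hk
    have hk' : k ≤ 2*m := by omega
    obtain ⟨j, hj⟩ : ∃ j, k + j = 2*m := ⟨2*m - k, by omega⟩
    unfold gcert
    rw [show 4*m+1-(k+1) = 2*m+j from by omega,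
        show 4*m+1-k = 2*m+j+1 from by omega,
        show 2*m+(k+1) = 2*m+k+1 from by omega,
        show 2*m+1+k = 2*m+k+1 from by omega]
    have ha : (2*(m:ℚ) + (j:ℚ) + 1) ≠ 0 := by positivity
    have hb : (2*(m:ℚ) + (k:ℚ) + 1) ≠ 0 := by positivity
    have hk1 : ((k:ℚ) + 1) ≠ 0 := by positivity
    have E1 : gch (t+1) (2*m+j+1) = (t+1) * gch t (2*m+j) / (2*(m:ℚ) + (j:ℚ) + 1) := by
      rw [eq_div_iff ha]
      have := gch_shift_succ t (2*m+j)
      push_cast at this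
      linear_combination this
    have E2 : gch (t+1) (2*m+k+1) = (t+1) * gch t (2*m+k) / (2*(m:ℚ) + (k:ℚ) + 1) := by
      rw [eq_div_iff hb]
      have := gch_shift_succ t (2*m+k)
      push_cast at this
      linear_combination this
    have E3 : gch t (2*m+j+1) = gch t (2*m+j) * (t - (2*(m:ℚ) + (j:ℚ))) / (2*(m:ℚ) + (j:ℚ) + 1) := by
      rw [eq_div_iff ha]
      have := gch_succ t (2*m+j)
      push_cast at this
      linear_combination this
    have E4 : gch t (2*m+k+1) = gch t (2*m+k) * (t - (2*(m:ℚ) + (k:ℚ))) / (2*(m:ℚ) + (k:ℚ) + 1) := by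
      rw [eq_div_iff hb]
      have := gch_succ t (2*m+k)
      push_cast at this
      linear_combination this
    have ec : (Nat.choose (2*m) (k+1) : ℚ) = (Nat.choose (2*m) k : ℚ) * (j:ℚ) / ((k:ℚ)+1) := by
      rw [eq_div_iff hk1]
      have h := Nat.choose_succ_right_eq (2*m) k
      rw [show 2*m - k = j from by omega] at h
      exact_mod_cast h
    have hjq : (j:ℚ) = 2*(m:ℚ) - (k:ℚ) := by
      have h : ((k:ℚ) + (j:ℚ)) = 2*(m:ℚ) := by exact_mod_cast hj
      linarith
    rw [E1, E2, E3, E4, ec]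
    push_cast
    rw [hjq]
    have d1 : 2*(m:ℚ) + (2*(m:ℚ) - (k:ℚ)) + 1 ≠ 0 := by
      have hkq : (k:ℚ) ≤ 2*(m:ℚ) := by exact_mod_cast hk'
      intro h; nlinarith
    have d2 : (m:ℚ)*2 + ((m:ℚ)*2 - (k:ℚ)) + 1 ≠ 0 := by
      rw [show (m:ℚ)*2 + ((m:ℚ)*2 - (k:ℚ)) + 1 = 2*(m:ℚ) + (2*(m:ℚ) - (k:ℚ)) + 1 by ring]; exact d1
    field_simp
    ring
  have tele := Finset.sum_range_sub (gcert m t) (2*m+1)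
  have g0 : gcert m t 0 = 0 := by simp [gcert]
  have gtop : gcert m t (2*m+1) = 0 := by
    simp [gcert, Nat.choose_succ_self]
  have expand : (t - 3*m) * (t - 2*m) * Sm m (t+1) - (t+1) * (t + m + 1) * Sm m t
      = ∑ k ∈ Finset.range (2*m+1), (gcert m t (k+1) - gcert m t k) := by
    unfold Sm
    rw [Finset.mul_sum, Finset.mul_sum, ← Finset.sum_sub_distrib]
    exact Finset.sum_congr rfl key
  rw [tele, g0, gtop] at expand
  linarith

lemma R_rec (m : ℕ) (t : ℚ) :
    (t - 3*m) * (t - 2*m) * Rm m (t+1) = (t+1) * (t + m + 1) * Rm m t := by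
  have e1 := gch_shift t (3*m+1)
  have e2 := gch_shift (t + (m:ℚ)) (3*m+1)
  have c1 : ((3*m+1 : ℕ) : ℚ) = 3*(m:ℚ)+1 := by push_cast; ring
  rw [c1] at e1 e2
  unfold Rm
  have harg : (t + 1 + (m:ℚ)) = (t + (m:ℚ)) + 1 := by ring
  rw [harg]
  set c := (-1 : ℚ) ^ m * (Nat.choose (2 * m) m : ℚ) / (Nat.choose (4 * m + 1) m : ℚ)
  set X := gch (t+1) (3*m+1)
  set Y := gch (t + (m:ℚ) + 1) (3*m+1)
  set U := gch t (3*m+1)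
  set V := gch (t + (m:ℚ)) (3*m+1)
  -- e1 : X * (t + 1 - (3m+1)) = (t+1) * U
  -- e2 : Y * (t + m + 1 - (3m+1)) = (t+m+1) * V
  linear_combination c * (t - 2*m) * Y * e1 + c * (t+1) * U * e2

lemma base_case (m : ℕ) (hm : 1 ≤ m) :
    Sm m ((3*m+1 : ℕ) : ℚ) = Rm m ((3*m+1 : ℕ) : ℚ) := by
  have hchoose_ne : ((Nat.choose (4*m+1) m : ℕ) : ℚ) ≠ 0 := by
    exact_mod_cast (Nat.choose_pos (show m ≤ 4*m+1 by omega)).ne'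
  have hS : Sm m ((3*m+1 : ℕ) : ℚ) = (-1:ℚ)^m * (Nat.choose (2*m) m : ℚ) := by
    unfold Sm
    rw [Finset.sum_eq_single_of_mem m (Finset.mem_range.mpr (by omega))]
    · rw [gch_natCast, gch_natCast,
        show 4*m+1-m = 3*m+1 from by omega, show 2*m+1+m = 3*m+1 from by omega,
        Nat.choose_self]
      norm_num
    · intro k hk hne
      rw [Finset.mem_range] at hk
      rcases Nat.lt_or_ge k m with h | h
      · rw [gch_natCast, Nat.choose_eq_zero_of_lt (show 3*m+1 < 4*m+1-k by omega)]
        ring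
      · have h2 : m < k := by omega
        rw [gch_natCast (3*m+1) (2*m+1+k), Nat.choose_eq_zero_of_lt (show 3*m+1 < 2*m+1+k by omega)]
        ring
  have hR : Rm m ((3*m+1 : ℕ) : ℚ) = (-1:ℚ)^m * (Nat.choose (2*m) m : ℚ) := by
    unfold Rm
    have harg : ((3*m+1 : ℕ) : ℚ) + (m:ℚ) = ((4*m+1 : ℕ) : ℚ) := by push_cast; ring
    rw [harg, gch_natCast, gch_natCast, Nat.choose_self,
      show (3*m+1 : ℕ) = 4*m+1 - m from by omega, Nat.choose_symm (show m ≤ 4*m+1 by omega)]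
    field_simp
    simp
  rw [hS, hR]

lemma all_nat (m : ℕ) (hm : 1 ≤ m) (i : ℕ) :
    Sm m ((3*m+1+i : ℕ) : ℚ) = Rm m ((3*m+1+i : ℕ) : ℚ) := by
  induction i with
  | zero => exact base_case m hm
  | succ i ih =>
    set n : ℕ := 3*m+1+i with hn
    have hs := S_rec m (n : ℚ)
    have hr := R_rec m (n : ℚ)
    have hcast : ((n:ℚ) + 1) = ((3*m+1+(i+1) : ℕ) : ℚ) := by
      rw [hn]; push_cast; ring
    rw [hcast] at hs hr
    have hprod : ((n:ℚ) - 3*m) * ((n:ℚ) - 2*m) ≠ 0 := by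
      have h1 : (n:ℚ) - 3*m = 1 + i := by rw [hn]; push_cast; ring
      have h2 : (n:ℚ) - 2*m = (m:ℚ) + 1 + i := by rw [hn]; push_cast; ring
      rw [h1, h2]
      positivity
    have : ((n:ℚ) - 3*m) * ((n:ℚ) - 2*m) * Sm m ((3*m+1+(i+1) : ℕ) : ℚ)
        = ((n:ℚ) - 3*m) * ((n:ℚ) - 2*m) * Rm m ((3*m+1+(i+1) : ℕ) : ℚ) := by
      rw [hs, hr, ih]
    exact mul_left_cancel₀ hprod this

/-- the identity
`∑_{k=0}^{2m} (−1)^k C(2m,k) Ch(t,4m+1−k) Ch(t,2m+1+k)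
  = ((−1)^m C(2m,m)/C(4m+1,m)) Ch(t,3m+1) Ch(t+m,3m+1)`. -/
theorem stmt_5 (m : ℕ) (hm : 1 ≤ m) (t : ℚ) :
    ∑ k ∈ Finset.range (2 * m + 1),
        (-1 : ℚ) ^ k * (Nat.choose (2 * m) k : ℚ)
          * gch t (4 * m + 1 - k) * gch t (2 * m + 1 + k)
      = ((-1 : ℚ) ^ m * (Nat.choose (2 * m) m : ℚ) / (Nat.choose (4 * m + 1) m : ℚ))
          * gch t (3 * m + 1) * gch (t + m) (3 * m + 1) := by
  suffices h : Sm m t = Rm m t by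
    unfold Sm Rm at h
    exact h
  set P : Polynomial ℚ :=
    (∑ k ∈ Finset.range (2*m+1),
      Polynomial.C ((-1:ℚ)^k * (Nat.choose (2*m) k : ℚ)
          * ((Nat.factorial (4*m+1-k) : ℚ))⁻¹ * ((Nat.factorial (2*m+1+k) : ℚ))⁻¹)
        * ((∏ j ∈ Finset.range (4*m+1-k), (Polynomial.X - Polynomial.C (j:ℚ)))
          * ∏ j ∈ Finset.range (2*m+1+k), (Polynomial.X - Polynomial.C (j:ℚ))))
    - Polynomial.C ((-1:ℚ)^m * (Nat.choose (2*m) m : ℚ) / (Nat.choose (4*m+1) m : ℚ)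
          * ((Nat.factorial (3*m+1) : ℚ))⁻¹ * ((Nat.factorial (3*m+1) : ℚ))⁻¹)
        * ((∏ j ∈ Finset.range (3*m+1), (Polynomial.X - Polynomial.C (j:ℚ)))
          * ∏ j ∈ Finset.range (3*m+1), (Polynomial.X + Polynomial.C (m:ℚ) - Polynomial.C (j:ℚ)))
    with hP
  have heval : ∀ x : ℚ, P.eval x = Sm m x - Rm m x := by
    intro x
    rw [hP]
    simp only [Polynomial.eval_sub, Polynomial.eval_finset_sum, Polynomial.eval_mul,
      Polynomial.eval_prod, Polynomial.eval_C, Polynomial.eval_X, Polynomial.eval_sub,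
      Polynomial.eval_add]
    unfold Sm Rm gch
    congr 1
    · apply Finset.sum_congr rfl
      intro k _
      rw [div_eq_mul_inv, div_eq_mul_inv]
      ring
    · rw [div_eq_mul_inv, div_eq_mul_inv]
      ring
  have hroot : ∀ i : ℕ, P.IsRoot ((3*m+1+i : ℕ) : ℚ) := by
    intro i
    rw [Polynomial.IsRoot, heval, all_nat m hm i, sub_self]
  have hinf : {x : ℚ | P.IsRoot x}.Infinite := by
    apply Set.infinite_of_injective_forall_mem
      (f := fun i : ℕ => ((3*m+1+i : ℕ) : ℚ))
    · intro a b hab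
      simp only [] at hab
      have : (3*m+1+a : ℕ) = (3*m+1+b : ℕ) := by exact_mod_cast hab
      omega
    · intro i
      exact hroot i
  have hP0 : P = 0 := Polynomial.eq_zero_of_infinite_isRoot P hinf
  have := heval t
  rw [hP0] at this
  simp only [Polynomial.eval_zero] at this
  linarith
end

section
/- Let m ≥ 1 be an integer. For every rational number t, Ch(t, 2m+1)² = ( (2(2m+1))^{2m+1} / ((2m+1)!)² ) · ∏_{i=0}^{2m} ( t(t−2m)/(2(2m+1)) − i(i−2m)/(2(2m+1)) ), where Ch(x,r) denotes the generalized binomial coefficient. (Equivalently, the point (x(t),y(t)) with x(t)=t(t−2m)/(2(2m+1)), y(t)=Ch(t,2m+1) lies on the curve y² = C_m ∏_{i=0}^{2m}(x − h^{2i+1,1}) with C_m = (2(2m+1))^{2m+1}/((2m+1)!)² and h^{2i+1,1} = i(i−2m)/(2(2m+1)).) -/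
open Finset

/-- the point `(x(t), y(t))` with `x(t) = t(t−2m)/(2(2m+1))`,
`y(t) = Ch(t,2m+1)` lies on the curve `y² = C_m ∏_{i=0}^{2m} (x − h^{2i+1,1})` with
`C_m = (2(2m+1))^{2m+1}/((2m+1)!)²` and `h^{2i+1,1} = i(i−2m)/(2(2m+1))`. -/
theorem stmt_6 (m : ℕ) (hm : 1 ≤ m) (t : ℚ) :
    (gch t (2 * m + 1)) ^ 2
      = ((2 * (2 * m + 1) : ℚ) ^ (2 * m + 1) / ((Nat.factorial (2 * m + 1) : ℚ)) ^ 2)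
        * ∏ i ∈ Finset.range (2 * m + 1),
            (t * (t - 2 * m) / (2 * (2 * m + 1))
              - (i : ℚ) * ((i : ℚ) - 2 * m) / (2 * (2 * m + 1))) := by
  have key : ∏ i ∈ Finset.range (2*m+1), (t + (i:ℚ) - 2*m)
      = ∏ i ∈ Finset.range (2*m+1), (t - (i:ℚ)) := by
    rw [← Finset.prod_range_reflect (fun i => t + (i:ℚ) - 2*m) (2*m+1)]
    apply Finset.prod_congr rfl
    intro i hi
    simp only [Finset.mem_range] at hi
    have h1 : (2*m+1-1-i : ℕ) = 2*m - i := by omega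
    rw [h1, Nat.cast_sub (by omega)]
    push_cast
    ring
  have h2 : ∏ i ∈ Finset.range (2*m+1),
      (t * (t - 2*m) / (2*(2*m+1)) - (i:ℚ)*((i:ℚ)-2*m)/(2*(2*m+1)))
      = (∏ i ∈ Finset.range (2*m+1), (t - (i:ℚ)))^2 / ((2*(2*m+1):ℚ))^(2*m+1) := by
    have hcongr : ∀ i ∈ Finset.range (2*m+1),
        t * (t - 2*m) / (2*(2*m+1)) - (i:ℚ)*((i:ℚ)-2*m)/(2*(2*m+1))
        = ((t - i) * (t + i - 2*m)) / (2*(2*m+1)) := by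
      intro i _
      have : ((2:ℚ)*(2*m+1)) ≠ 0 := by positivity
      field_simp
      ring
    rw [Finset.prod_congr rfl hcongr, Finset.prod_div_distrib, Finset.prod_mul_distrib, key,
      Finset.prod_const, Finset.card_range]
    ring
  rw [h2, gch]
  have hne : ((2*m+1).factorial : ℚ) ≠ 0 := Nat.cast_ne_zero.2 (Nat.factorial_ne_zero _)
  have hne2 : ((2*(2*m+1):ℚ))^(2*m+1) ≠ 0 := by positivity
  field_simp
end

section
/- Let m ≥ 1 be an integer. For every rational number t, ∏_{i=0}^{3m} ( t(t−2m)/(2(2m+1)) − i(i−2m)/(2(2m+1)) ) = ( ((3m+1)!)² / (2(2m+1))^{3m+1} ) · Ch(t, 3m+1) · Ch(t+m, 3m+1), where Ch(x,r) denotes the generalized binomial coefficient. -/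
open Finset

/-- the identity
`∏_{i=0}^{3m} (t(t−2m)/(2(2m+1)) − i(i−2m)/(2(2m+1)))
  = (((3m+1)!)²/(2(2m+1))^{3m+1}) · Ch(t,3m+1) · Ch(t+m,3m+1)`. -/
theorem stmt_7 (m : ℕ) (hm : 1 ≤ m) (t : ℚ) :
    ∏ i ∈ Finset.range (3 * m + 1),
        (t * (t - 2 * m) / (2 * (2 * m + 1))
          - (i : ℚ) * ((i : ℚ) - 2 * m) / (2 * (2 * m + 1)))
      = ((Nat.factorial (3 * m + 1) : ℚ) ^ 2 / (2 * (2 * m + 1) : ℚ) ^ (3 * m + 1))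
          * gch t (3 * m + 1) * gch (t + m) (3 * m + 1) := by
  have hc : (2 * (2 * (m:ℚ) + 1)) ≠ 0 := by positivity
  have h1 : ∀ i ∈ Finset.range (3*m+1),
      (t * (t - 2 * m) / (2 * (2 * m + 1)) - (i : ℚ) * ((i : ℚ) - 2 * m) / (2 * (2 * m + 1)))
        = ((t - i) * (t + m - ((3*m - i : ℕ) : ℚ))) / (2 * (2 * m + 1)) := by
    intro i hi
    simp only [Finset.mem_range] at hi
    have h : ((3*m - i : ℕ) : ℚ) = 3*m - i := by
      push_cast [Nat.cast_sub (by omega : i ≤ 3*m)]; ring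
    rw [h]; ring
  rw [Finset.prod_congr rfl h1, Finset.prod_div_distrib, Finset.prod_mul_distrib]
  have h2 : ∏ i ∈ Finset.range (3*m+1), (t + (m:ℚ) - ((3*m - i : ℕ) : ℚ))
      = ∏ j ∈ Finset.range (3*m+1), (t + (m:ℚ) - (j:ℚ)) := by
    rw [← Finset.prod_range_reflect (fun j => (t + (m:ℚ) - (j:ℚ))) (3*m+1)]
    apply Finset.prod_congr rfl
    intro i hi
    simp only [Finset.mem_range] at hi
    congr 2
  rw [h2]
  have hf : (Nat.factorial (3*m+1) : ℚ) ≠ 0 := by positivity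
  have hcp : (2 * (2 * (m:ℚ) + 1)) ^ (3*m+1) ≠ 0 := pow_ne_zero _ hc
  simp only [gch]
  simp only [Finset.prod_const, Finset.card_range]
  field_simp
end

section
/- Let m ≥ 1 be an integer such that p := 2m+1 is prime, and define G_m(t) = ∑_{l=1}^{2m+1} ∑_{i=0}^{l−1} ∑_{j=0}^{2m+1+i−l} ∑_{k=0}^{l−1−i} (−1)^{j+k+l} · C(2m+1,l) · Ch(−2m−1, j) · Ch(−2m−1, k) · Ch(2m−t, j+k+2m+1) · Ch(t, i−j−l+2m+1) · Ch(t, l−k−1−i) for integers t, where C(n,k) is the ordinary binomial coefficient and Ch(x,r) the generalized binomial coefficient. Then G_m(3m+1) is an integer and G_m(3m+1) ≡ 1 (mod p); in particular G_m(3m+1) ≠ 0. -/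
open Finset

/-- The quadruple sum `G_m(t)` from the Appendix. -/
def Gfun (m : ℕ) (t : ℚ) : ℚ :=
  ∑ l ∈ Finset.Icc 1 (2 * m + 1), ∑ i ∈ Finset.range l,
    ∑ j ∈ Finset.range (2 * m + 1 + i - l + 1), ∑ k ∈ Finset.range (l - i),
      (-1 : ℚ) ^ (j + k + l) * (Nat.choose (2 * m + 1) l : ℚ)
        * gch (-(2 * (m : ℚ) + 1)) j * gch (-(2 * (m : ℚ) + 1)) k
        * gch (2 * (m : ℚ) - t) (j + k + 2 * m + 1)
        * gch t (i + 2 * m + 1 - j - l) * gch t (l - k - 1 - i)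

lemma aux_prod_natCast_sub (n : ℕ) :
    ∀ r : ℕ, ∏ j ∈ range r, ((n:ℚ) - j) = (n.descFactorial r : ℚ)
  | 0 => by simp
  | (r+1) => by
    rw [prod_range_succ, aux_prod_natCast_sub n r, Nat.descFactorial_succ]
    rcases le_or_gt r n with h | h
    · push_cast [h]; ring
    · rw [Nat.descFactorial_of_lt h]; push_cast; ring

lemma aux_gch_natCast (n r : ℕ) : gch (n:ℚ) r = (n.choose r : ℚ) := by
  rw [gch, aux_prod_natCast_sub, Nat.descFactorial_eq_factorial_mul_choose]
  push_cast
  rw [mul_comm, mul_div_assoc, div_self (by exact_mod_cast (Nat.factorial_pos r).ne'), mul_one]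

lemma aux_prod_asc (s : ℕ) :
    ∀ r : ℕ, ∏ j ∈ range r, ((s:ℚ)+1+j) = ((s+r).descFactorial r : ℚ)
  | 0 => by simp
  | (r+1) => by
    rw [prod_range_succ, aux_prod_asc s r, show s + (r+1) = (s+r)+1 from rfl,
      Nat.succ_descFactorial_succ]
    push_cast; ring

lemma aux_gch_neg (s r : ℕ) : gch (-1 - (s:ℚ)) r = (-1)^r * ((s+r).choose r : ℚ) := by
  rw [gch]
  have h1 : ∏ j ∈ range r, (-1 - (s:ℚ) - j) = (-1)^r * ∏ j ∈ range r, ((s:ℚ)+1+j) := by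
    rw [show ((-1:ℚ))^r = ∏ _j ∈ range r, (-1:ℚ) by simp, ← prod_mul_distrib]
    exact prod_congr rfl fun j _ => by ring
  rw [h1, aux_prod_asc, Nat.descFactorial_eq_factorial_mul_choose]
  push_cast
  rw [mul_div_assoc, mul_comm ((Nat.factorial r : ℚ)) _, mul_div_assoc,
    div_self (by exact_mod_cast (Nat.factorial_pos r).ne'), mul_one]

/-- Integer version of the quadruple sum. -/
def auxSint (m : ℕ) : ℤ :=
  ∑ l ∈ Finset.Icc 1 (2*m+1), ∑ i ∈ Finset.range l,
    ∑ j ∈ Finset.range (2*m+1+i-l+1), ∑ k ∈ Finset.range (l-i),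
      (-1:ℤ)^(j+k+l) * (Nat.choose (2*m+1) l : ℤ)
        * ((-1)^j * ((2*m+j).choose j : ℤ)) * ((-1)^k * ((2*m+k).choose k : ℤ))
        * ((-1)^(j+k+2*m+1) * ((m+(j+k+2*m+1)).choose (j+k+2*m+1) : ℤ))
        * ((3*m+1).choose (i+2*m+1-j-l) : ℤ) * ((3*m+1).choose (l-k-1-i) : ℤ)

lemma aux_Gfun_eq (m : ℕ) : Gfun m (3 * m + 1) = ((auxSint m : ℤ) : ℚ) := by
  rw [Gfun, auxSint]
  push_cast
  refine Finset.sum_congr rfl fun l hl => Finset.sum_congr rfl fun i hi =>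
    Finset.sum_congr rfl fun j hj => Finset.sum_congr rfl fun k hk => ?_
  rw [show (-(2*(m:ℚ)+1)) = -1 - ((2*m : ℕ):ℚ) by push_cast; ring,
    show (2*(m:ℚ) - (3*(m:ℚ)+1)) = -1 - ((m:ℕ):ℚ) by push_cast; ring,
    show (3*(m:ℚ)+1) = ((3*m+1 : ℕ):ℚ) by push_cast; ring,
    aux_gch_neg, aux_gch_neg, aux_gch_neg, aux_gch_natCast, aux_gch_natCast]

lemma aux_Sint_mod (m : ℕ) (hm : 1 ≤ m) (hp : Nat.Prime (2*m+1)) :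
    ((auxSint m : ℤ) : ZMod (2*m+1)) = 1 := by
  haveI : Fact (Nat.Prime (2*m+1)) := ⟨hp⟩
  have key : ∀ n k : ℕ, ((n.choose k : ℕ) : ZMod (2*m+1)) =
      (((n % (2*m+1)).choose (k % (2*m+1)) : ℕ) : ZMod (2*m+1)) *
      (((n / (2*m+1)).choose (k / (2*m+1)) : ℕ) : ZMod (2*m+1)) := by
    intro n k
    have h := Choose.choose_modEq_choose_mod_mul_choose_div (p := 2*m+1) (n := n) (k := k)
    have h2 := (ZMod.intCast_eq_intCast_iff _ _ _).mpr h
    push_cast at h2 ⊢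
    exact h2
  have hz : ∀ j : ℕ, 1 ≤ j → j ≤ 2*m → (((2*m+j).choose j : ℕ) : ZMod (2*m+1)) = 0 := by
    intro j h1 h2
    rw [key, show (2*m+j) % (2*m+1) = j - 1 by
        rw [show 2*m+j = (2*m+1) + (j-1) by omega, Nat.add_mod_left, Nat.mod_eq_of_lt (by omega)],
      Nat.mod_eq_of_lt (by omega), Nat.choose_eq_zero_of_lt (by omega)]
    simp
  have hc1 : (((m+(2*m+1)).choose (2*m+1) : ℕ) : ZMod (2*m+1)) = 1 := by
    rw [key, show (m+(2*m+1)) % (2*m+1) = m by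
        rw [Nat.add_mod_right, Nat.mod_eq_of_lt (by omega)],
      show (m+(2*m+1)) / (2*m+1) = 1 by
        rw [Nat.add_div_right _ (by omega), Nat.div_eq_of_lt (by omega)],
      Nat.mod_self, Nat.div_self (by omega), Nat.choose_zero_right, Nat.choose_self]
    simp
  have hc2 : (((6*m+2).choose (2*m) : ℕ) : ZMod (2*m+1)) = 1 := by
    rw [key, show (6*m+2) % (2*m+1) = 2*m by
        rw [show 6*m+2 = (2*m) + (2*m+1) + (2*m+1) by ring, Nat.add_mod_right, Nat.add_mod_right,
          Nat.mod_eq_of_lt (by omega)],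
      show (6*m+2) / (2*m+1) = 2 by
        rw [show 6*m+2 = (2*m) + (2*m+1) + (2*m+1) by ring, Nat.add_div_right _ (by omega),
          Nat.add_div_right _ (by omega), Nat.div_eq_of_lt (by omega)],
      show (2*m) % (2*m+1) = 2*m from Nat.mod_eq_of_lt (by omega),
      show (2*m) / (2*m+1) = 0 from Nat.div_eq_of_lt (by omega),
      Nat.choose_self, Nat.choose_zero_right]
    simp
  rw [auxSint]
  push_cast
  rw [Finset.sum_eq_single_of_mem (2*m+1) (mem_Icc.mpr ⟨by omega, le_refl _⟩) ?side]
  case side =>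
    intro b hb hne
    rw [mem_Icc] at hb
    have hb0 : (((2*m+1).choose b : ℕ) : ZMod (2*m+1)) = 0 :=
      (ZMod.natCast_eq_zero_iff _ _).mpr (hp.dvd_choose_self (by omega) (by omega))
    refine Finset.sum_eq_zero fun i hi => Finset.sum_eq_zero fun j hj =>
      Finset.sum_eq_zero fun k hk => ?_
    rw [hb0]; ring
  · have hidx : ∀ i:ℕ, 2*m+1+i-(2*m+1)+1 = i+1 := fun i => by omega
    simp only [hidx]
    have step : ∀ i ∈ range (2*m+1),
        (∑ j ∈ range (i+1), ∑ k ∈ range (2*m+1-i),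
          (-1:ZMod (2*m+1))^(j+k+(2*m+1)) * ((2*m+1).choose (2*m+1) : ℕ)
            * ((-1)^j * ((2*m+j).choose j : ℕ)) * ((-1)^k * ((2*m+k).choose k : ℕ))
            * ((-1)^(j+k+2*m+1) * ((m+(j+k+2*m+1)).choose (j+k+2*m+1) : ℕ))
            * ((3*m+1).choose (i+2*m+1-j-(2*m+1)) : ℕ) * ((3*m+1).choose ((2*m+1)-k-1-i) : ℕ))
        = (((3*m+1).choose i : ℕ) : ZMod (2*m+1)) *
          (((3*m+1).choose (2*m-i) : ℕ) : ZMod (2*m+1)) := by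
      intro i hi
      rw [mem_range] at hi
      rw [Finset.sum_eq_single_of_mem 0 (mem_range.mpr (by omega)) ?jside]
      case jside =>
        intro j hj hjne
        rw [mem_range] at hj
        refine Finset.sum_eq_zero fun k hk => ?_
        rw [hz j (by omega) (by omega)]; ring
      rw [Finset.sum_eq_single_of_mem 0 (mem_range.mpr (by omega)) ?kside]
      case kside =>
        intro k hk hkne
        rw [mem_range] at hk
        rw [hz k (by omega) (by omega)]; ring
      simp only [show ∀ i:ℕ, i+2*m+1-0-(2*m+1) = i from fun i => by omega,
        show (2*m+1)-0-1-i = 2*m-i from by omega,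
        show 0+0+(2*m+1) = 2*m+1 from by omega, show 0+0+2*m+1 = 2*m+1 from by omega,
        Nat.add_zero, Nat.choose_self, Nat.choose_zero_right, pow_zero]
      rw [hc1]
      push_cast
      ring_nf
      have h4 : ((-1 : ZMod (2*m+1)))^(m*4) = 1 := by
        rw [show m*4 = 2*(m*2) by ring, pow_mul]; simp
      rw [h4, mul_one]
    rw [Finset.sum_congr rfl step]
    have hv : ∑ i ∈ range (2*m+1), ((3*m+1).choose i) * ((3*m+1).choose (2*m-i))
        = (6*m+2).choose (2*m) := by
      rw [show 6*m+2 = (3*m+1)+(3*m+1) by ring, Nat.add_choose_eq,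
        Finset.Nat.sum_antidiagonal_eq_sum_range_succ_mk]
    calc ∑ i ∈ range (2*m+1), (((3*m+1).choose i : ℕ) : ZMod (2*m+1)) *
            (((3*m+1).choose (2*m-i) : ℕ) : ZMod (2*m+1))
        = ((∑ i ∈ range (2*m+1), ((3*m+1).choose i) * ((3*m+1).choose (2*m-i)) : ℕ)
            : ZMod (2*m+1)) := by push_cast; rfl
      _ = 1 := by rw [hv, hc2]

/-- if `2m+1` is prime then `G_m(3m+1)` is an integer congruent to `1`
mod `2m+1`; in particular it is nonzero. -/
theorem stmt_9 (m : ℕ) (hm : 1 ≤ m) (hp : Nat.Prime (2 * m + 1)) :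
    ∃ g : ℤ, Gfun m (3 * m + 1) = (g : ℚ)
      ∧ g ≡ 1 [ZMOD (2 * m + 1 : ℤ)] ∧ g ≠ 0 := by
  have h1 := aux_Gfun_eq m
  have h2 := aux_Sint_mod m hm hp
  have h3 : auxSint m ≡ 1 [ZMOD (2 * m + 1 : ℤ)] := by
    have h := (ZMod.intCast_eq_intCast_iff (auxSint m) 1 (2*m+1)).mp (by rw [h2]; simp)
    have hcast : ((2*m+1 : ℕ) : ℤ) = (2 * m + 1 : ℤ) := by push_cast; ring
    rwa [hcast] at h
  refine ⟨auxSint m, h1, h3, ?_⟩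
  intro h0
  rw [h0] at h3
  have hd : (2 * (m:ℤ) + 1) ∣ 1 - 0 := h3.dvd
  have := Int.le_of_dvd one_pos (by simpa using hd)
  omega
end

section
/- Let m ≥ 1 be an integer such that p := 2m+1 is prime, and let i be an integer with 0 ≤ i ≤ 2m and i ≠ m. Then p divides the product C(3m+1, i) · C(3m+1, 2m−i) of ordinary binomial coefficients. -/
/-- if `2m+1` is prime and `0 ≤ i ≤ 2m`, `i ≠ m`, then
`2m+1` divides `C(3m+1, i) · C(3m+1, 2m−i)`. -/
theorem stmt_11 (m : ℕ) (hm : 1 ≤ m) (hp : Nat.Prime (2 * m + 1))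
    (i : ℕ) (hi : i ≤ 2 * m) (hne : i ≠ m) :
    (2 * m + 1) ∣ Nat.choose (3 * m + 1) i * Nat.choose (3 * m + 1) (2 * m - i) := by
  rcases lt_or_gt_of_ne hne with h | h
  · refine Dvd.dvd.mul_left ?_ _
    exact hp.dvd_choose (by omega) (by omega) (by omega)
  · refine Dvd.dvd.mul_right ?_ _
    exact hp.dvd_choose (by omega) (by omega) (by omega)
end

section
/- For every real number q with 0 < q < 1, ∏_{n=1}^{∞} (1 − q^{2n})(1 − q^{n/2}) = ∑_{m₁=0}^{∞} ∑_{m₂=0}^{∞} (−1)^{m₁+m₂} · (−q^{1/2}; q^{1/2})_{m₂} · q^{m₁(m₁+1) + m₂(m₂+1)/4} / ( (q²; q²)_{m₁} · (q; q)_{m₂} ), where the double series converges absolutely. (Up to the prefactor q^{5/48}, the left-hand side equals η(2τ)η(τ/2).) -/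
open Finset

def qPoch (a x : ℝ) (n : ℕ) : ℝ :=
  ∏ j ∈ Finset.range n, (1 - a * x ^ j)

/-- triangular numbers: `tri n = n*(n-1)/2`. -/
def tri : ℕ → ℕ
  | 0 => 0
  | n + 1 => tri n + n

lemma two_mul_tri_add (m : ℕ) : 2 * (tri m + m) = m * (m + 1) := by
  induction m with
  | zero => rfl
  | succ n ih => simp only [tri]; ring_nf; ring_nf at ih; omega

/-- Gaussian binomial coefficient (as a real number), defined by the Pascal recursion. -/
def Bq (q : ℝ) : ℕ → ℕ → ℝ
  | 0, 0 => 1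
  | 0, _ + 1 => 0
  | _ + 1, 0 => 1
  | N + 1, n + 1 => q ^ (n + 1) * Bq q N (n + 1) + Bq q N n

lemma Bq_zero_right (q : ℝ) (N : ℕ) : Bq q N 0 = 1 := by cases N <;> rfl

lemma Bq_eq_zero (q : ℝ) : ∀ N n, N < n → Bq q N n = 0 := by
  intro N
  induction N with
  | zero => intro n hn; match n, hn with | n + 1, _ => rfl
  | succ N ih =>
    intro n hn
    match n, hn with
    | n + 1, hn =>
      show q ^ (n + 1) * Bq q N (n + 1) + Bq q N n = 0
      rw [ih (n+1) (by omega), ih n (by omega)]; ring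

lemma Bq_self (q : ℝ) : ∀ N, Bq q N N = 1 := by
  intro N
  induction N with
  | zero => rfl
  | succ N ih =>
    show q ^ (N + 1) * Bq q N (N + 1) + Bq q N N = 1
    rw [Bq_eq_zero q N (N+1) (by omega), ih]; ring

lemma qPoch_succ (a x : ℝ) (n : ℕ) :
    qPoch a x (n + 1) = qPoch a x n * (1 - a * x ^ n) := Finset.prod_range_succ _ _

lemma qPoch_q_succ (q : ℝ) (n : ℕ) :
    qPoch q q (n + 1) = qPoch q q n * (1 - q ^ (n + 1)) := by
  rw [qPoch_succ, pow_succ']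

/-- the `q`-binomial theorem. -/
lemma qbinom (q : ℝ) : ∀ (N : ℕ) (x : ℝ),
    ∏ j ∈ Finset.range N, (1 - x * q ^ j)
      = ∑ n ∈ Finset.range (N + 1), (-1) ^ n * q ^ tri n * x ^ n * Bq q N n := by
  intro N
  induction N with
  | zero => intro x; simp [tri, Bq]
  | succ N ih =>
    intro x
    have hL : ∏ j ∈ Finset.range (N + 1), (1 - x * q ^ j)
        = (1 - x) * ∏ j ∈ Finset.range N, (1 - (q * x) * q ^ j) := by
      have h0 := Finset.prod_range_succ' (fun j => 1 - x * q ^ j) N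
      simp only [pow_zero, mul_one] at h0
      rw [h0, mul_comm]
      congr 1
      refine Finset.prod_congr rfl fun j _ => ?_
      ring
    rw [hL, ih (q * x)]
    set g : ℕ → ℝ := fun n => (-1) ^ n * q ^ (tri n + n) * x ^ n * Bq q N n with hg
    have hS : ∑ n ∈ Finset.range (N + 1), (-1) ^ n * q ^ tri n * (q * x) ^ n * Bq q N n
        = ∑ n ∈ Finset.range (N + 1), g n := by
      refine Finset.sum_congr rfl fun n _ => ?_
      simp only [hg, mul_pow, pow_add]; ring
    rw [hS]
    rw [Finset.sum_range_succ' (fun n => (-1) ^ n * q ^ tri n * x ^ n * Bq q (N + 1) n) (N + 1)]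
    have hRe : ∑ k ∈ Finset.range (N + 1),
        (-1) ^ (k + 1) * q ^ tri (k + 1) * x ^ (k + 1) * Bq q (N + 1) (k + 1)
        = ∑ k ∈ Finset.range (N + 1), (g (k + 1) - x * g k) := by
      refine Finset.sum_congr rfl fun k _ => ?_
      show (-1) ^ (k + 1) * q ^ tri (k + 1) * x ^ (k + 1)
            * (q ^ (k + 1) * Bq q N (k + 1) + Bq q N k) = _
      simp only [hg, tri]
      have h1 : tri k + k + (k + 1) = (tri k + k) + (k + 1) := rfl
      simp only [pow_add, pow_succ]
      ring
    rw [hRe, Finset.sum_sub_distrib, ← Finset.mul_sum]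
    have hshift : ∑ k ∈ Finset.range (N + 1), g (k + 1)
        = ∑ n ∈ Finset.range (N + 1), g n - g 0 + g (N + 1) := by
      have h1 := Finset.sum_range_succ' g (N + 1)
      have h2 := Finset.sum_range_succ g (N + 1)
      rw [h1] at h2
      linarith
    have hg0 : g 0 = 1 := by simp [hg, tri, Bq_zero_right]
    have hgN : g (N + 1) = 0 := by
      simp [hg, Bq_eq_zero q N (N + 1) (by omega)]
    have hf0 : (-1 : ℝ) ^ 0 * q ^ tri 0 * x ^ 0 * Bq q (N + 1) 0 = 1 := by
      simp [tri, Bq_zero_right]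
    rw [hshift, hg0, hgN, hf0]
    ring

lemma Bq_mul_eq (q : ℝ) : ∀ N n, n ≤ N →
    Bq q N n * (qPoch q q n * qPoch q q (N - n)) = qPoch q q N := by
  intro N
  induction N with
  | zero => intro n hn; interval_cases n; simp [Bq, qPoch]
  | succ N ih =>
    intro n hn
    match n with
    | 0 => simp [Bq_zero_right, qPoch]
    | n + 1 =>
      rcases Nat.lt_or_ge n N with h | h
      · -- n + 1 ≤ N
        have ih1 := ih (n + 1) (by omega)
        have ih2 := ih n (by omega)
        show (q ^ (n + 1) * Bq q N (n + 1) + Bq q N n)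
            * (qPoch q q (n + 1) * qPoch q q (N + 1 - (n + 1))) = qPoch q q (N + 1)
        have e1 : N + 1 - (n + 1) = N - n := by omega
        have e2 : N - n = (N - (n + 1)) + 1 := by omega
        have e5 : (N - (n + 1)) + 1 = N - n := by omega
        have e4 : q ^ (n + 1) * q ^ (N - n) = q ^ (N + 1) := by
          rw [← pow_add]; congr 1; omega
        have e3 : qPoch q q (n + 1) = qPoch q q n * (1 - q ^ (n + 1)) := qPoch_q_succ q n
        have hP : qPoch q q (N - n) = qPoch q q (N - (n + 1)) * (1 - q ^ (N - n)) := by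
          rw [e2, qPoch_q_succ, e5]
        rw [e1]
        calc (q ^ (n + 1) * Bq q N (n + 1) + Bq q N n)
              * (qPoch q q (n + 1) * qPoch q q (N - n))
            = q ^ (n + 1) * (1 - q ^ (N - n))
                * (Bq q N (n + 1) * (qPoch q q (n + 1) * qPoch q q (N - (n + 1))))
              + (1 - q ^ (n + 1))
                * (Bq q N n * (qPoch q q n * qPoch q q (N - n))) := by
              rw [hP, e3]; ring
          _ = q ^ (n + 1) * (1 - q ^ (N - n)) * qPoch q q N
              + (1 - q ^ (n + 1)) * qPoch q q N := by rw [ih1, ih2]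
          _ = qPoch q q N * (1 - q ^ (n + 1) * q ^ (N - n)) := by ring
          _ = qPoch q q N * (1 - q ^ (N + 1)) := by rw [e4]
          _ = qPoch q q (N + 1) := (qPoch_q_succ q N).symm
      · -- n = N
        have hn' : n = N := by omega
        subst hn'
        show (q ^ (n + 1) * Bq q n (n + 1) + Bq q n n)
            * (qPoch q q (n + 1) * qPoch q q (n + 1 - (n + 1))) = qPoch q q (n + 1)
        rw [Bq_eq_zero q n (n + 1) (by omega), Bq_self]
        simp [qPoch]

section Analytic

variable {q : ℝ}

lemma pow_succ_lt_one' (h0 : 0 < q) (h1 : q < 1) (n : ℕ) : q ^ (n + 1) < 1 :=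
  pow_lt_one₀ h0.le h1 n.succ_ne_zero

lemma qPoch_q_pos (h0 : 0 < q) (h1 : q < 1) (n : ℕ) : 0 < qPoch q q n := by
  refine Finset.prod_pos fun j _ => ?_
  have := pow_succ_lt_one' h0 h1 j
  rw [pow_succ'] at this
  linarith

lemma qPoch_q_le_one (h0 : 0 < q) (h1 : q < 1) (n : ℕ) : qPoch q q n ≤ 1 := by
  refine Finset.prod_le_one (fun j _ => ?_) (fun j _ => ?_)
  · have := pow_succ_lt_one' h0 h1 j
    rw [pow_succ'] at this
    linarith
  · nlinarith [pow_pos h0 j, h0.le]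

lemma log_summable (h0 : 0 < q) (h1 : q < 1) :
    Summable fun n : ℕ => Real.log (1 - q ^ (n + 1)) := by
  have hq1 : 0 < 1 - q := by linarith
  refine Summable.of_norm_bounded (g := fun n => (1 - q)⁻¹ * (q * q ^ n)) ?_ (fun n => ?_)
  · exact ((summable_geometric_of_lt_one h0.le h1).mul_left q).mul_left _
  · have hx : 0 < q ^ (n + 1) := pow_pos h0 _
    have hx1 : q ^ (n + 1) < 1 := pow_succ_lt_one' h0 h1 n
    have hpos : 0 < 1 - q ^ (n + 1) := by linarith
    have hle : Real.log (1 - q ^ (n + 1)) ≤ 0 :=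
      Real.log_nonpos (by linarith) (by linarith)
    rw [Real.norm_eq_abs, abs_of_nonpos hle, ← Real.log_inv]
    have h2 : Real.log (1 - q ^ (n + 1))⁻¹ ≤ (1 - q ^ (n + 1))⁻¹ - 1 :=
      Real.log_le_sub_one_of_pos (by positivity)
    refine h2.trans ?_
    have hqn : q ^ (n + 1) ≤ q := by
      calc q ^ (n + 1) ≤ q ^ 1 := pow_le_pow_of_le_one h0.le h1.le (by omega)
      _ = q := pow_one q
    have e1 : (1 - q ^ (n + 1))⁻¹ - 1 = q ^ (n + 1) / (1 - q ^ (n + 1)) := by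
      field_simp
      ring
    rw [e1]
    have e2 : q ^ (n + 1) / (1 - q ^ (n + 1)) ≤ q ^ (n + 1) / (1 - q) :=
      div_le_div_of_nonneg_left hx.le hq1 (by linarith)
    refine e2.trans ?_
    rw [div_eq_mul_inv, pow_succ']
    ring_nf
    exact le_refl _

lemma hasProd_one_sub (h0 : 0 < q) (h1 : q < 1) :
    HasProd (fun n : ℕ => 1 - q ^ (n + 1))
      (Real.exp (∑' n : ℕ, Real.log (1 - q ^ (n + 1)))) := by
  have hs := (log_summable h0 h1).hasSum
  have h := hs.rexp
  have he : (Real.exp ∘ fun n : ℕ => Real.log (1 - q ^ (n + 1)))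
      = fun n : ℕ => 1 - q ^ (n + 1) := by
    funext n
    have := pow_succ_lt_one' h0 h1 n
    exact Real.exp_log (by linarith)
  rwa [he] at h

lemma tprod_one_sub_pos (h0 : 0 < q) (h1 : q < 1) :
    0 < ∏' n : ℕ, (1 - q ^ (n + 1)) := by
  rw [(hasProd_one_sub h0 h1).tprod_eq]
  exact Real.exp_pos _

lemma qPoch_eq_prod (n : ℕ) : qPoch q q n = ∏ j ∈ Finset.range n, (1 - q ^ (j + 1)) :=
  Finset.prod_congr rfl fun j _ => by rw [pow_succ']

lemma tendsto_qPoch (h0 : 0 < q) (h1 : q < 1) :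
    Filter.Tendsto (fun N => qPoch q q N) Filter.atTop
      (nhds (∏' n : ℕ, (1 - q ^ (n + 1)))) := by
  have h := ((hasProd_one_sub h0 h1).tprod_eq ▸ (hasProd_one_sub h0 h1)).tendsto_prod_nat
  refine h.congr fun N => ?_
  exact (qPoch_eq_prod N).symm

lemma qPoch_antitone (h0 : 0 < q) (h1 : q < 1) : Antitone (fun n => qPoch q q n) := by
  refine antitone_nat_of_succ_le fun n => ?_
  rw [qPoch_q_succ]
  nlinarith [qPoch_q_pos h0 h1 n, pow_pos h0 (n + 1), pow_succ_lt_one' h0 h1 n]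

lemma tprod_le_qPoch (h0 : 0 < q) (h1 : q < 1) (n : ℕ) :
    (∏' n : ℕ, (1 - q ^ (n + 1))) ≤ qPoch q q n := by
  refine le_of_tendsto (tendsto_qPoch h0 h1) ?_
  filter_upwards [Filter.eventually_ge_atTop n] with m hm
  exact qPoch_antitone h0 h1 hm

lemma tprod_one_sub_le_one (h0 : 0 < q) (h1 : q < 1) :
    (∏' n : ℕ, (1 - q ^ (n + 1))) ≤ 1 := by
  refine le_of_tendsto (tendsto_qPoch h0 h1) ?_
  exact Filter.Eventually.of_forall fun n => qPoch_q_le_one h0 h1 n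

end Analytic

open Filter in
lemma euler_hasSum {q : ℝ} (h0 : 0 < q) (h1 : q < 1) :
    HasSum (fun n : ℕ => (-1) ^ n * q ^ (tri n + n) / qPoch q q n)
      (∏' n : ℕ, (1 - q ^ (n + 1))) := by
  set C : ℝ := ∏' n : ℕ, (1 - q ^ (n + 1)) with hCdef
  have hC : 0 < C := tprod_one_sub_pos h0 h1
  have hCle1 : C ≤ 1 := tprod_one_sub_le_one h0 h1
  have hPt : Tendsto (fun N => qPoch q q N) atTop (nhds C) := tendsto_qPoch h0 h1
  set F : ℕ → ℕ → ℝ := fun N n => (-1) ^ n * q ^ (tri n + n) * Bq q N n with hF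
  set a : ℕ → ℝ := fun n => (-1) ^ n * q ^ (tri n + n) / qPoch q q n with ha
  -- key finite identity
  have key : ∀ N, qPoch q q N = ∑' n, F N n := by
    intro N
    have h := qbinom q N q
    have hL : qPoch q q N = ∏ j ∈ Finset.range N, (1 - q * q ^ j) := rfl
    have hR : ∑ n ∈ Finset.range (N + 1), (-1) ^ n * q ^ tri n * q ^ n * Bq q N n
        = ∑ n ∈ Finset.range (N + 1), F N n := by
      refine Finset.sum_congr rfl fun n _ => ?_
      simp only [hF, pow_add]; ring
    rw [hL, h, hR]
    refine (tsum_eq_sum fun n hn => ?_).symm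
    have hNn : N < n := by
      simp only [Finset.mem_range] at hn; omega
    simp [hF, Bq_eq_zero q N n hNn]
  -- pointwise limits
  have hlim : ∀ n, Tendsto (fun N => F N n) atTop (nhds (a n)) := by
    intro n
    have hPn := qPoch_q_pos h0 h1 n
    have hden : Tendsto (fun N => qPoch q q n * qPoch q q (N - n)) atTop
        (nhds (qPoch q q n * C)) :=
      (hPt.comp (tendsto_sub_atTop_nat n)).const_mul _
    have hratio : Tendsto (fun N => qPoch q q N / (qPoch q q n * qPoch q q (N - n)))
        atTop (nhds (C / (qPoch q q n * C))) :=
      hPt.div hden (by positivity)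
    have hBq : Tendsto (fun N => Bq q N n) atTop (nhds (C / (qPoch q q n * C))) := by
      refine hratio.congr' ?_
      filter_upwards [eventually_ge_atTop n] with N hN
      have h := Bq_mul_eq q N n hN
      have hne : qPoch q q n * qPoch q q (N - n) ≠ 0 := by
        have := qPoch_q_pos h0 h1 (N - n); positivity
      rw [div_eq_iff hne]
      linarith [h]
    have hval : (-1 : ℝ) ^ n * q ^ (tri n + n) * (C / (qPoch q q n * C)) = a n := by
      rw [ha]
      field_simp
    have := hBq.const_mul ((-1 : ℝ) ^ n * q ^ (tri n + n))
    rw [hval] at this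
    exact this.congr fun N => by rw [hF]
  -- uniform bound
  have hbound : ∀ N n, ‖F N n‖ ≤ C⁻¹ * C⁻¹ * q ^ n := by
    intro N n
    rcases le_or_gt n N with hn | hn
    · have hPn := qPoch_q_pos h0 h1 n
      have hPNn := qPoch_q_pos h0 h1 (N - n)
      have hPN := qPoch_q_pos h0 h1 N
      have hBeq : Bq q N n = qPoch q q N / (qPoch q q n * qPoch q q (N - n)) := by
        have h := Bq_mul_eq q N n hn
        rw [eq_div_iff (by positivity)]
        linarith [h]
      have hBpos : 0 < Bq q N n := by rw [hBeq]; positivity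
      have hqpow : 0 < q ^ (tri n + n) := pow_pos h0 _
      have habs : ‖F N n‖ = q ^ (tri n + n) * Bq q N n := by
        rw [hF, Real.norm_eq_abs, abs_mul, abs_mul, abs_pow, abs_neg, abs_one, one_pow,
          one_mul, abs_of_pos hqpow, abs_of_pos hBpos]
      rw [habs]
      have h1' : q ^ (tri n + n) ≤ q ^ n :=
        pow_le_pow_of_le_one h0.le h1.le (Nat.le_add_left n (tri n))
      have h2' : Bq q N n ≤ C⁻¹ * C⁻¹ := by
        rw [hBeq]
        have hCn : C ≤ qPoch q q n := tprod_le_qPoch h0 h1 n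
        have hCNn : C ≤ qPoch q q (N - n) := tprod_le_qPoch h0 h1 (N - n)
        have hPN1 : qPoch q q N ≤ 1 := qPoch_q_le_one h0 h1 N
        rw [div_le_iff₀ (by positivity)]
        calc qPoch q q N ≤ 1 := hPN1
          _ ≤ C⁻¹ * C⁻¹ * (C * C) := by
              rw [show C⁻¹ * C⁻¹ * (C * C) = (C⁻¹ * C) * (C⁻¹ * C) by ring,
                inv_mul_cancel₀ hC.ne', one_mul]
          _ ≤ C⁻¹ * C⁻¹ * (qPoch q q n * qPoch q q (N - n)) := by
              have : (0:ℝ) < C⁻¹ * C⁻¹ := by positivity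
              refine mul_le_mul_of_nonneg_left ?_ this.le
              exact mul_le_mul hCn hCNn hC.le hPn.le
      calc q ^ (tri n + n) * Bq q N n ≤ q ^ n * (C⁻¹ * C⁻¹) :=
            mul_le_mul h1' h2' hBpos.le (pow_pos h0 n).le
        _ = C⁻¹ * C⁻¹ * q ^ n := by ring
    · rw [hF]
      simp only [Bq_eq_zero q N n hn, mul_zero, norm_zero]
      positivity
  have hbsum : Summable (fun n => C⁻¹ * C⁻¹ * q ^ n) :=
    (summable_geometric_of_lt_one h0.le h1).mul_left _
  -- dominated convergence
  have htt : Tendsto (fun N => ∑' n, F N n) atTop (nhds (∑' n, a n)) :=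
    tendsto_tsum_of_dominated_convergence hbsum hlim
      (Filter.Eventually.of_forall fun N => hbound N)
  have htt' : Tendsto (fun N => qPoch q q N) atTop (nhds (∑' n, a n)) :=
    htt.congr fun N => (key N).symm
  have hsum_eq : ∑' n, a n = C := tendsto_nhds_unique htt' hPt
  -- summability of a
  have hasum : Summable a := by
    refine Summable.of_norm_bounded hbsum fun n => ?_
    have hPn := qPoch_q_pos h0 h1 n
    have hCn : C ≤ qPoch q q n := tprod_le_qPoch h0 h1 n
    have habs : ‖a n‖ = q ^ (tri n + n) / qPoch q q n := by
      rw [ha, Real.norm_eq_abs, abs_div, abs_mul, abs_pow, abs_neg, abs_one, one_pow,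
        one_mul, abs_of_pos (pow_pos h0 _), abs_of_pos hPn]
    rw [habs]
    have h1' : q ^ (tri n + n) ≤ q ^ n :=
      pow_le_pow_of_le_one h0.le h1.le (Nat.le_add_left n (tri n))
    rw [div_le_iff₀ hPn]
    calc q ^ (tri n + n) ≤ q ^ n := h1'
      _ = q ^ n * 1 := (mul_one _).symm
      _ ≤ q ^ n * (C⁻¹ * C⁻¹ * qPoch q q n) := by
          refine mul_le_mul_of_nonneg_left ?_ (pow_pos h0 n).le
          have : (1:ℝ) = (C⁻¹ * C) * (C⁻¹ * C) := by
            rw [inv_mul_cancel₀ hC.ne']; ring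
          calc (1:ℝ) ≤ C⁻¹ * 1 := by
                rw [mul_one]; exact (one_le_inv₀ hC).2 hCle1
            _ ≤ C⁻¹ * (C⁻¹ * qPoch q q n) := by
                refine mul_le_mul_of_nonneg_left ?_ (by positivity)
                calc (1:ℝ) = C⁻¹ * C := (inv_mul_cancel₀ hC.ne').symm
                  _ ≤ C⁻¹ * qPoch q q n :=
                      mul_le_mul_of_nonneg_left hCn (by positivity)
            _ = C⁻¹ * C⁻¹ * qPoch q q n := by ring
      _ = C⁻¹ * C⁻¹ * q ^ n * qPoch q q n := by ring
  have := hasum.hasSum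
  rwa [hsum_eq] at this

lemma qPoch_sq (p : ℝ) (m : ℕ) :
    qPoch (p ^ 2) (p ^ 2) m = qPoch p p m * qPoch (-p) p m := by
  unfold qPoch
  rw [← Finset.prod_mul_distrib]
  refine Finset.prod_congr rfl fun j _ => ?_
  ring

lemma qPoch_neg_pos {p : ℝ} (hp0 : 0 < p) (m : ℕ) : 0 < qPoch (-p) p m := by
  refine Finset.prod_pos fun j _ => ?_
  have : 0 < p * p ^ j := by positivity
  simp only [neg_mul]
  linarith

/-- double-sum fermionic expression for
`∏_{n≥1} (1-q^{2n})(1-q^{n/2})`, with absolute convergence. -/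
theorem stmt_14 (q : ℝ) (h0 : 0 < q) (h1 : q < 1) :
    Multipliable (fun n : ℕ => (1 - q ^ (2 * n + 2)) * (1 - Real.sqrt q ^ (n + 1)))
      ∧ Summable (fun p : ℕ × ℕ =>
          (-1 : ℝ) ^ (p.1 + p.2) * qPoch (-(Real.sqrt q)) (Real.sqrt q) p.2
            * q ^ ((p.1 : ℝ) * ((p.1 : ℝ) + 1) + (p.2 : ℝ) * ((p.2 : ℝ) + 1) / 4)
            / (qPoch (q ^ 2) (q ^ 2) p.1 * qPoch q q p.2))
      ∧ (∏' n : ℕ, (1 - q ^ (2 * n + 2)) * (1 - Real.sqrt q ^ (n + 1)))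
          = ∑' p : ℕ × ℕ,
              (-1 : ℝ) ^ (p.1 + p.2) * qPoch (-(Real.sqrt q)) (Real.sqrt q) p.2
                * q ^ ((p.1 : ℝ) * ((p.1 : ℝ) + 1) + (p.2 : ℝ) * ((p.2 : ℝ) + 1) / 4)
                / (qPoch (q ^ 2) (q ^ 2) p.1 * qPoch q q p.2) := by
  have hp0 : 0 < Real.sqrt q := Real.sqrt_pos.mpr h0
  have hp1 : Real.sqrt q < 1 := by
    rw [show (1 : ℝ) = Real.sqrt 1 by rw [Real.sqrt_one]]
    exact Real.sqrt_lt_sqrt h0.le h1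
  set p : ℝ := Real.sqrt q with hpdef
  have hpq : p ^ 2 = q := Real.sq_sqrt h0.le
  have hQ0 : 0 < q ^ 2 := by positivity
  have hQ1 : q ^ 2 < 1 := by nlinarith
  have hA := euler_hasSum hQ0 hQ1
  have hB := euler_hasSum hp0 hp1
  set A : ℕ → ℝ := fun n => (-1) ^ n * (q ^ 2) ^ (tri n + n) / qPoch (q ^ 2) (q ^ 2) n
    with hAdef
  set B : ℕ → ℝ := fun n => (-1) ^ n * p ^ (tri n + n) / qPoch p p n with hBdef
  -- exponent conversions
  have he1 : ∀ m : ℕ, q ^ ((m : ℝ) * ((m : ℝ) + 1)) = (q ^ 2) ^ (tri m + m) := by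
    intro m
    have hc : (m : ℝ) * ((m : ℝ) + 1) = ((2 * (tri m + m) : ℕ) : ℝ) := by
      rw [two_mul_tri_add]; push_cast; ring
    rw [hc, Real.rpow_natCast, pow_mul]
  have he2 : ∀ m : ℕ, q ^ ((m : ℝ) * ((m : ℝ) + 1) / 4) = p ^ (tri m + m) := by
    intro m
    have h2c : (2 : ℝ) * ((tri m + m : ℕ) : ℝ) = (m : ℝ) * ((m : ℝ) + 1) := by
      have h := congrArg (Nat.cast (R := ℝ)) (two_mul_tri_add m)
      push_cast at h ⊢
      linarith [h]
    rw [← hpq, ← Real.rpow_natCast p 2, ← Real.rpow_mul hp0.le]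
    rw [← Real.rpow_natCast p (tri m + m)]
    congr 1
    push_cast at h2c ⊢
    nlinarith [h2c]
  have hqPoch2 : ∀ m, qPoch q q m = qPoch p p m * qPoch (-p) p m := by
    intro m
    rw [← hpq, qPoch_sq]
  -- the term factors
  have hterm : ∀ pr : ℕ × ℕ,
      (-1 : ℝ) ^ (pr.1 + pr.2) * qPoch (-p) p pr.2
          * q ^ ((pr.1 : ℝ) * ((pr.1 : ℝ) + 1) + (pr.2 : ℝ) * ((pr.2 : ℝ) + 1) / 4)
          / (qPoch (q ^ 2) (q ^ 2) pr.1 * qPoch q q pr.2)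
        = A pr.1 * B pr.2 := by
    rintro ⟨m1, m2⟩
    have hne1 : qPoch (q ^ 2) (q ^ 2) m1 ≠ 0 := (qPoch_q_pos hQ0 hQ1 m1).ne'
    have hne2 : qPoch p p m2 ≠ 0 := (qPoch_q_pos hp0 hp1 m2).ne'
    have hne3 : qPoch (-p) p m2 ≠ 0 := (qPoch_neg_pos hp0 m2).ne'
    simp only [hAdef, hBdef]
    rw [Real.rpow_add h0, he1, he2, pow_add, hqPoch2 m2]
    field_simp
  -- infinite products
  have hPA : HasProd (fun n : ℕ => 1 - (q ^ 2) ^ (n + 1))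
      (∏' n : ℕ, (1 - (q ^ 2) ^ (n + 1))) :=
    (hasProd_one_sub hQ0 hQ1).multipliable.hasProd
  have hPB : HasProd (fun n : ℕ => 1 - p ^ (n + 1)) (∏' n : ℕ, (1 - p ^ (n + 1))) :=
    (hasProd_one_sub hp0 hp1).multipliable.hasProd
  have hprod := hPA.mul hPB
  have hfun : (fun n : ℕ => (1 - q ^ (2 * n + 2)) * (1 - Real.sqrt q ^ (n + 1)))
      = fun n : ℕ => (1 - (q ^ 2) ^ (n + 1)) * (1 - p ^ (n + 1)) := by
    funext n
    rw [← hpdef, ← pow_mul, Nat.mul_add, Nat.mul_one]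
  -- summability of the double series
  have hnormA : Summable fun n => ‖A n‖ := hA.summable.norm
  have hnormB : Summable fun n => ‖B n‖ := hB.summable.norm
  have hsumAB : Summable fun pr : ℕ × ℕ => A pr.1 * B pr.2 :=
    summable_mul_of_summable_norm hnormA hnormB
  refine ⟨?_, ?_, ?_⟩
  · rw [hfun]
    exact hprod.multipliable
  · refine hsumAB.congr fun pr => ?_
    exact (hterm pr).symm
  · rw [hfun, hprod.tprod_eq]
    rw [tsum_congr hterm]
    rw [← tsum_mul_tsum_of_summable_norm hnormA hnormB, hA.tsum_eq, hB.tsum_eq]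
end

section
/- Let k be a nonnegative integer. For every real number x with 0 < x < 1, 1 / ∏_{n=1}^{∞} (1 − x^{n}) = ∑_{n=0}^{∞} x^{n²+kn} / ( (x; x)_n · (x; x)_{n+k} ) = ∑_{n=0}^{∞} (−x; x)_n · (−x; x)_{n+k} · x^{n²+kn} / ( (x²; x²)_n · (x²; x²)_{n+k} ), where all series and the product converge absolutely (Durfee rectangle identities, with x = q^{1/2}). -/
open Finset

namespace Stmt17

noncomputable def gb (x : ℝ) : ℕ → ℕ → ℝ
  | 0, _ => 1
  | _+1, 0 => 1
  | a+1, b+1 => gb x (a+1) b + x^(b+1) * gb x a (b+1)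

variable {x : ℝ}

lemma P_zero : qPoch x x 0 = 1 := by simp [qPoch]

lemma P_succ (m : ℕ) : qPoch x x (m+1) = qPoch x x m * (1 - x^(m+1)) := by
  rw [qPoch, Finset.prod_range_succ, ← pow_succ']
  rfl

lemma P_pos (h0 : 0 < x) (h1 : x < 1) (m : ℕ) : 0 < qPoch x x m := by
  induction m with
  | zero => simp [P_zero]
  | succ m ih =>
    rw [P_succ]
    have h : x ^ (m+1) < 1 := pow_lt_one₀ h0.le h1 (Nat.succ_ne_zero m)
    have : 0 < 1 - x ^ (m+1) := by linarith
    positivity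

lemma P_le_one (h0 : 0 < x) (h1 : x < 1) (m : ℕ) : qPoch x x m ≤ 1 := by
  induction m with
  | zero => simp [P_zero]
  | succ m ih =>
    rw [P_succ]
    have h2 : 0 ≤ 1 - x ^ (m+1) := by
      have : x ^ (m+1) < 1 := pow_lt_one₀ h0.le h1 (Nat.succ_ne_zero m)
      linarith
    have h4 : qPoch x x m * (1 - x^(m+1)) <= 1 * (1 - x^(m+1)) :=
      mul_le_mul_of_nonneg_right ih h2
    have h5 : 0 <= x^(m+1) := pow_nonneg h0.le (m+1)
    linarith

lemma gb_zero_left (b : ℕ) : gb x 0 b = 1 := by simp [gb]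

lemma gb_zero_right (a : ℕ) : gb x a 0 = 1 := by cases a <;> simp [gb]

lemma gb_succ_succ (a b : ℕ) :
    gb x (a+1) (b+1) = gb x (a+1) b + x^(b+1) * gb x a (b+1) := by
  simp [gb]

lemma gb_mul (h0 : 0 < x) (h1 : x < 1) : ∀ a b : ℕ,
    gb x a b * (qPoch x x a * qPoch x x b) = qPoch x x (a+b) := by
  intro a
  induction a with
  | zero => intro b; simp [gb_zero_left, P_zero]
  | succ a iha =>
    intro b
    induction b with
    | zero => simp [gb_zero_right, P_zero]
    | succ b ihb =>
      have hA : gb x (a+1) b * (qPoch x x (a+1) * qPoch x x b) = qPoch x x (a+1+b) := ihb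
      have hB : gb x a (b+1) * (qPoch x x a * qPoch x x (b+1)) = qPoch x x (a+(b+1)) := iha (b+1)
      rw [gb_succ_succ]
      have e1 : qPoch x x (b+1) = qPoch x x b * (1 - x^(b+1)) := P_succ b
      have e2 : qPoch x x (a+1) = qPoch x x a * (1 - x^(a+1)) := P_succ a
      have e3 : (a+1)+(b+1) = (a+1+b)+1 := by ring
      have e4 : a+(b+1) = a+1+b := by ring
      rw [e4] at hB
      rw [e1] at hB
      rw [e2] at hA
      rw [e3, P_succ (a+1+b), ← hA, e1, e2]
      linear_combination (x^(b+1)*(1 - x^(a+1))) * hB - (x^(b+1)*(1 - x^(a+1))) * hA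

end Stmt17

namespace Stmt17

lemma P_ne (h0 : 0 < x) (h1 : x < 1) (m : ℕ) : qPoch x x m ≠ 0 :=
  (P_pos h0 h1 m).ne'

lemma gb_eq (h0 : 0 < x) (h1 : x < 1) (a b : ℕ) :
    gb x a b = qPoch x x (a+b) / (qPoch x x a * qPoch x x b) := by
  rw [eq_div_iff (mul_pos (P_pos h0 h1 a) (P_pos h0 h1 b)).ne']
  exact gb_mul h0 h1 a b

lemma gb_symm (h0 : 0 < x) (h1 : x < 1) (a b : ℕ) : gb x a b = gb x b a := by
  rw [gb_eq h0 h1, gb_eq h0 h1, Nat.add_comm a b, mul_comm]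

lemma gb_ruleB (h0 : 0 < x) (h1 : x < 1) (a b : ℕ) :
    gb x (a+1) (b+1) = gb x a (b+1) + x^(a+1) * gb x (a+1) b := by
  rw [gb_symm h0 h1 (a+1) (b+1), gb_succ_succ, gb_symm h0 h1 (b+1) a,
    gb_symm h0 h1 b (a+1)]

lemma gb_nonneg (h0 : 0 < x) (h1 : x < 1) (a b : ℕ) : 0 ≤ gb x a b := by
  rw [gb_eq h0 h1]
  have := P_pos h0 h1 (a+b)
  have := P_pos h0 h1 a
  have := P_pos h0 h1 b
  positivity

lemma sum_split1 (f g h : ℕ → ℝ) (c : ℝ) (N : ℕ)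
    (H : ∀ n, n ≤ N → f n = g n + c * h n) (Hlast : f (N+1) = c * h (N+1)) :
    ∑ n ∈ range (N+2), f n = ∑ n ∈ range (N+1), g n + c * ∑ n ∈ range (N+2), h n := by
  rw [Finset.sum_range_succ f, Finset.sum_range_succ h,
    Finset.sum_congr rfl (fun n hn => H n (Nat.lt_succ_iff.mp (Finset.mem_range.mp hn))),
    Finset.sum_add_distrib, ← Finset.mul_sum, Hlast]
  ring

lemma sum_split2 (f g h : ℕ → ℝ) (c : ℝ) (N : ℕ)
    (H : ∀ n, n ≤ N → f n = g n + c * h n) :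
    ∑ n ∈ range (N+1), f n = ∑ n ∈ range (N+1), g n + c * ∑ n ∈ range (N+1), h n := by
  rw [Finset.sum_congr rfl (fun n hn => H n (Nat.lt_succ_iff.mp (Finset.mem_range.mp hn))),
    Finset.sum_add_distrib, ← Finset.mul_sum]

lemma sum_splitD (t a c : ℕ → ℝ) (X : ℝ) (N : ℕ)
    (H0 : t 0 = a 0)
    (H : ∀ m, m < N → t (m+1) = a (m+1) + X * c m)
    (Hlast : t (N+1) = X * c N) :
    ∑ n ∈ range (N+2), t n = ∑ n ∈ range (N+1), a n + X * ∑ m ∈ range (N+1), c m := by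
  rw [Finset.sum_range_succ' t (N+1), Finset.sum_range_succ' a N,
    Finset.sum_range_succ (fun m => t (m+1)) N, Finset.sum_range_succ c N,
    Finset.sum_congr rfl (fun m hm => H m (Finset.mem_range.mp hm)),
    Finset.sum_add_distrib, ← Finset.mul_sum, H0, Hlast]
  ring

lemma sum_splitD' (t a c : ℕ → ℝ) (X : ℝ) (N : ℕ)
    (H0 : t 0 = a 0)
    (H : ∀ m, m ≤ N → t (m+1) = a (m+1) + X * c m) :
    ∑ n ∈ range (N+2), t n = ∑ n ∈ range (N+2), a n + X * ∑ m ∈ range (N+1), c m := by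
  rw [Finset.sum_range_succ' t (N+1), Finset.sum_range_succ' a (N+1),
    Finset.sum_congr rfl (fun m hm => H m (Nat.lt_succ_iff.mp (Finset.mem_range.mp hm))),
    Finset.sum_add_distrib, ← Finset.mul_sum, H0]
  ring

lemma durfee (h0 : 0 < x) (h1 : x < 1) :
    ∀ (s M L k : ℕ), M + L ≤ s →
      gb x M (L+k) = ∑ n ∈ range (min M L + 1),
        x^(n*(n+k)) * gb x n (L-n) * gb x (M-n) (n+k) := by
  intro s
  induction s with
  | zero =>
    intro M L k h
    have hM : M = 0 := by omega
    have hL : L = 0 := by omega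
    subst hM; subst hL
    simp [gb_zero_left]
  | succ s ih =>
    intro M L k hML
    match M, L with
    | 0, L => simp [gb_zero_left, gb_zero_right]
    | M'+1, 0 => simp [gb_zero_left, gb_zero_right]
    | M'+1, L'+1 =>
      set L := L'+1 with hLdef
      induction k with
      | succ k ihk =>
        -- main case k+1
        have hA := ih M' L (k+1) (by omega)
        have hB := ihk
        have hrule : gb x (M'+1) (L+(k+1)) =
            gb x M' (L+(k+1)) + x^(M'+1) * gb x (M'+1) (L+k) :=
          gb_ruleB h0 h1 M' (L+k)
        rw [hrule, hA, hB]
        have hterm : ∀ n, n ≤ M' →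
            x^(n*(n+(k+1))) * gb x n (L-n) * gb x (M'+1-n) (n+(k+1))
            = x^(n*(n+(k+1))) * gb x n (L-n) * gb x (M'-n) (n+(k+1))
              + x^(M'+1) * (x^(n*(n+k)) * gb x n (L-n) * gb x (M'+1-n) (n+k)) := by
          intro n hn
          have hn1 : M'+1-n = (M'-n)+1 := by omega
          rw [hn1, show n+(k+1) = (n+k)+1 by omega, gb_ruleB h0 h1 (M'-n) (n+k)]
          have e1 : x^(n*(n+(k+1))) * x^(M'-n+1) = x^(M'+1) * x^(n*(n+k)) := by
            rw [← pow_add, ← pow_add]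
            congr 1
            have e2 : n*(n+(k+1)) = n*(n+k)+n := Nat.mul_succ n (n+k)
            omega
          linear_combination (gb x n (L-n) * gb x ((M'-n)+1) (n+k)) * e1
        by_cases hc : M'+1 ≤ L
        · have m1 : min (M'+1) L = M'+1 := min_eq_left hc
          have m2 : min M' L = M' := min_eq_left (by omega)
          rw [m1, m2]
          have hlast : x^((M'+1)*((M'+1)+(k+1))) * gb x (M'+1) (L-(M'+1))
              * gb x (M'+1-(M'+1)) ((M'+1)+(k+1))
              = x^(M'+1) * (x^((M'+1)*((M'+1)+k)) * gb x (M'+1) (L-(M'+1))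
                * gb x (M'+1-(M'+1)) ((M'+1)+k)) := by
            rw [show M'+1-(M'+1) = 0 by omega]
            simp only [gb_zero_left]
            have e3 : (M'+1)*((M'+1)+(k+1)) = (M'+1) + (M'+1)*((M'+1)+k) := by ring
            rw [e3, pow_add]
            ring
          exact (sum_split1 _ _ _ _ M' hterm hlast).symm
        · have hL : L ≤ M' := by omega
          have m1 : min (M'+1) L = L := min_eq_right (by omega)
          have m2 : min M' L = L := min_eq_right hL
          rw [m1, m2, hLdef]
          exact (sum_split2 _ _ _ _ (L'+1) (fun n hn => hterm n (by omega))).symm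
      | zero =>
        have hA := ih M' L 0 (by omega)
        have hC := ih L' M' 1 (by omega)
        simp only [Nat.add_zero] at hA ⊢
        rw [hLdef] at hA ⊢
        rw [gb_ruleB h0 h1 M' L', hA, gb_symm h0 h1 (M'+1) L', hC]
        have H0 : x^((0:ℕ)*0) * gb x 0 (L'+1-0) * gb x (M'+1-0) 0
            = x^((0:ℕ)*0) * gb x 0 (L'+1-0) * gb x (M'-0) 0 := by
          simp [gb_zero_left, gb_zero_right]
        have Hterm : ∀ m, m < M' →
            x^((m+1)*(m+1)) * gb x (m+1) (L'+1-(m+1)) * gb x (M'+1-(m+1)) (m+1)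
            = x^((m+1)*(m+1)) * gb x (m+1) (L'+1-(m+1)) * gb x (M'-(m+1)) (m+1)
              + x^(M'+1) * (x^(m*(m+1)) * gb x m (M'-m) * gb x (L'-m) (m+1)) := by
          intro m hm
          have e : M'+1-(m+1) = (M'-(m+1))+1 := by omega
          rw [e, gb_ruleB h0 h1 (M'-(m+1)) m]
          rw [show (M'-(m+1))+1 = M'-m by omega, show L'+1-(m+1) = L'-m by omega]
          rw [gb_symm h0 h1 m (M'-m), gb_symm h0 h1 (L'-m) (m+1)]
          have epow : x^((m+1)*(m+1)) * x^(M'-m) = x^(M'+1) * x^(m*(m+1)) := by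
            rw [← pow_add, ← pow_add]
            congr 1
            have h2 : (m+1)*(m+1) = m*(m+1)+(m+1) := by ring
            omega
          linear_combination (gb x (m+1) (L'-m) * gb x (M'-m) m) * epow
        by_cases hc : M' ≤ L'
        · have m1 : min (M'+1) (L'+1) = M'+1 := min_eq_left (by omega)
          have m2 : min M' (L'+1) = M' := min_eq_left (by omega)
          have m3 : min L' M' = M' := min_eq_right hc
          rw [m1, m2, m3]
          have Hlast : x^((M'+1)*(M'+1)) * gb x (M'+1) (L'+1-(M'+1)) * gb x (M'+1-(M'+1)) (M'+1)
              = x^(M'+1) * (x^(M'*(M'+1)) * gb x M' (M'-M') * gb x (L'-M') (M'+1)) := by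
            rw [show M'+1-(M'+1) = 0 by omega, show M'-M' = 0 by omega,
              show L'+1-(M'+1) = L'-M' by omega]
            simp only [gb_zero_left, gb_zero_right]
            rw [gb_symm h0 h1 (L'-M') (M'+1)]
            have epow : x^((M'+1)*(M'+1)) = x^(M'+1) * x^(M'*(M'+1)) := by
              rw [← pow_add]
              congr 1
              have h2 : (M'+1)*(M'+1) = M'*(M'+1)+(M'+1) := by ring
              omega
            rw [epow]
            ring
          exact (sum_splitD _ _ _ _ M' H0 Hterm Hlast).symm
        · have m1 : min (M'+1) (L'+1) = L'+1 := min_eq_right (by omega)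
          have m2 : min M' (L'+1) = L'+1 := min_eq_right (by omega)
          have m3 : min L' M' = L' := min_eq_left (by omega)
          rw [m1, m2, m3]
          exact (sum_splitD' _ _ _ _ L' H0 (fun m hm => Hterm m (by omega))).symm

end Stmt17

namespace Stmt17
variable {x : ℝ}

lemma prod_one_sub_ge (s : Finset ℕ) (f : ℕ → ℝ) (h : ∀ i ∈ s, 0 ≤ f i ∧ f i ≤ 1) :
    1 - ∑ i ∈ s, f i ≤ ∏ i ∈ s, (1 - f i) := by
  classical
  induction s using Finset.induction_on with
  | empty => simp
  | @insert a s ha ih =>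
    rw [Finset.prod_insert ha, Finset.sum_insert ha]
    have h1 := h a (Finset.mem_insert_self _ _)
    have h2 : ∀ i ∈ s, 0 ≤ f i ∧ f i ≤ 1 := fun i hi => h i (Finset.mem_insert_of_mem hi)
    have ihs := ih h2
    have hsn : 0 ≤ ∑ i ∈ s, f i := Finset.sum_nonneg (fun i hi => (h2 i hi).1)
    nlinarith [mul_le_mul_of_nonneg_left ihs (by linarith : (0:ℝ) ≤ 1 - f a),
      mul_nonneg h1.1 hsn]

lemma P_anti (h0 : 0 < x) (h1 : x < 1) {a b : ℕ} (hab : a ≤ b) :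
    qPoch x x b ≤ qPoch x x a := by
  induction b, hab using Nat.le_induction with
  | base => exact le_refl _
  | succ b hab ih =>
    rw [P_succ]
    have hp := P_pos h0 h1 b
    have hx1 : x^(b+1) ≤ 1 := (pow_lt_one₀ h0.le h1 (Nat.succ_ne_zero b)).le
    have hx0 : 0 ≤ x^(b+1) := pow_nonneg h0.le _
    nlinarith

lemma exists_lb (h0 : 0 < x) (h1 : x < 1) :
    ∃ c : ℝ, 0 < c ∧ ∀ m, c ≤ qPoch x x m := by
  obtain ⟨m0, hm0⟩ := exists_pow_lt_of_lt_one (show (0:ℝ) < (1-x)/2 by linarith) h1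
  have hP0 := P_pos h0 h1 m0
  refine ⟨qPoch x x m0 / 2, by linarith, ?_⟩
  intro m
  rcases le_or_gt m m0 with hm | hm
  · have := P_anti h0 h1 hm
    linarith
  · have hsplit := prod_range_mul_prod_Ico (fun j => (1 - x * x ^ j)) hm.le
    have hcond : ∀ j ∈ Finset.Ico m0 m, 0 ≤ x * x^j ∧ x * x^j ≤ 1 := by
      intro j _
      constructor
      · positivity
      · have : x * x^j = x^(j+1) := by rw [pow_succ]; ring
        rw [this]
        exact (pow_lt_one₀ h0.le h1 (Nat.succ_ne_zero j)).le
    have hW := prod_one_sub_ge (Finset.Ico m0 m) (fun j => x * x^j) hcond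
    have hsum : ∑ j ∈ Finset.Ico m0 m, x * x^j ≤ 1/2 := by
      have e1 : ∑ j ∈ Finset.Ico m0 m, x * x^j
          = x^(m0+1) * ∑ i ∈ Finset.range (m - m0), x^i := by
        rw [Finset.sum_Ico_eq_sum_range, Finset.mul_sum]
        apply Finset.sum_congr rfl
        intro i _
        rw [← pow_add]
        rw [show x * x^(m0+i) = x^(m0+i+1) by rw [pow_succ]; ring]
        congr 1
        omega
      have e2 : ∑ i ∈ Finset.range (m - m0), x^i ≤ (1-x)⁻¹ := by
        have hs := summable_geometric_of_lt_one h0.le h1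
        have := Summable.sum_le_tsum (Finset.range (m - m0))
          (fun i _ => pow_nonneg h0.le i) hs
        rwa [tsum_geometric_of_lt_one h0.le h1] at this
      have e3 : x^(m0+1) ≤ (1-x)/2 := by
        have : x^(m0+1) ≤ x^m0 := pow_le_pow_of_le_one h0.le h1.le (Nat.le_succ m0)
        linarith
      have h1x : (0:ℝ) < 1 - x := by linarith
      calc ∑ j ∈ Finset.Ico m0 m, x * x^j
          = x^(m0+1) * ∑ i ∈ Finset.range (m - m0), x^i := e1
        _ ≤ x^(m0+1) * (1-x)⁻¹ := by
            apply mul_le_mul_of_nonneg_left e2 (pow_nonneg h0.le _)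
        _ ≤ ((1-x)/2) * (1-x)⁻¹ := by
            apply mul_le_mul_of_nonneg_right e3 (inv_nonneg.2 h1x.le)
        _ = 1/2 := by field_simp
    have htail : (1:ℝ)/2 ≤ ∏ j ∈ Finset.Ico m0 m, (1 - x * x^j) := by linarith
    have : qPoch x x m0 * ∏ j ∈ Finset.Ico m0 m, (1 - x * x^j) = qPoch x x m := hsplit
    nlinarith

lemma mult_one_sub (h0 : 0 < x) (h1 : x < 1) :
    Multipliable (fun n : ℕ => 1 - x^(n+1)) := by
  have hf0 : ∀ n : ℕ, 0 ≤ 1 - x^(n+1) := by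
    intro n
    have : x^(n+1) < 1 := pow_lt_one₀ h0.le h1 (by omega)
    linarith
  have hf1 : ∀ n : ℕ, 1 - x^(n+1) ≤ 1 := by
    intro n
    have := pow_nonneg h0.le (n+1)
    linarith
  have hanti : Antitone (fun s : Finset ℕ => ∏ i ∈ s, (1 - x^(i+1))) := by
    intro s t hst
    dsimp only
    rw [← Finset.prod_sdiff hst]
    have hle1 : ∏ i ∈ t \ s, (1 - x^(i+1)) ≤ 1 :=
      Finset.prod_le_one (fun i _ => hf0 i) (fun i _ => hf1 i)
    have hnn : 0 ≤ ∏ i ∈ s, (1 - x^(i+1)) := Finset.prod_nonneg (fun i _ => hf0 i)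
    nlinarith [Finset.prod_nonneg (fun i (_ : i ∈ t \ s) => hf0 i)]
  have hbdd : BddBelow (Set.range (fun s : Finset ℕ => ∏ i ∈ s, (1 - x^(i+1)))) := by
    refine ⟨0, ?_⟩
    rintro y ⟨s, rfl⟩
    exact Finset.prod_nonneg (fun i _ => hf0 i)
  exact ⟨_, tendsto_atTop_ciInf hanti hbdd⟩

lemma P_eq (M : ℕ) : qPoch x x M = ∏ j ∈ Finset.range M, (1 - x^(j+1)) := by
  apply Finset.prod_congr rfl
  intro j _
  rw [pow_succ]
  ring_nf

end Stmt17

namespace Stmt17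
open Filter Topology

lemma key (h0 : 0 < x) (h1 : x < 1) (k : ℕ) :
    Summable (fun n : ℕ => x ^ (n^2 + k*n) / (qPoch x x n * qPoch x x (n+k)))
    ∧ 1 / (∏' n : ℕ, (1 - x ^ (n+1)))
        = ∑' n : ℕ, x ^ (n^2+k*n) / (qPoch x x n * qPoch x x (n+k)) := by
  obtain ⟨c, hc0, hc⟩ := exists_lb h0 h1
  have hc1 : c ≤ 1 := le_trans (hc 0) (by rw [P_zero])
  have hmult := mult_one_sub h0 h1
  set Pinf := ∏' n : ℕ, (1 - x^(n+1)) with hPinfdef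
  have htend : Tendsto (fun M : ℕ => qPoch x x M) atTop (𝓝 Pinf) := by
    have h := hmult.hasProd.tendsto_prod_nat
    exact h.congr (fun M => (P_eq M).symm)
  have hPinfc : c ≤ Pinf := ge_of_tendsto htend (Filter.Eventually.of_forall hc)
  have hPinf0 : 0 < Pinf := lt_of_lt_of_le hc0 hPinfc
  set g : ℕ → ℝ := fun n => x^n * (1/(c*c)) * (1/(c*c)) with hgdef
  have hg_sum : Summable g :=
    ((summable_geometric_of_lt_one h0.le h1).mul_right _).mul_right _
  set fM : ℕ → ℕ → ℝ := fun M n =>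
    if n ≤ M then x^(n*(n+k)) * gb x n (M-n) * gb x (M-n) (n+k) else 0 with hfMdef
  set gl : ℕ → ℝ := fun n =>
    x^(n*(n+k)) * (qPoch x x n)⁻¹ * (qPoch x x (n+k))⁻¹ with hgldef
  have hFM : ∀ M, gb x M (M+k) = ∑' n, fM M n := by
    intro M
    have h1' : ∑' n, fM M n = ∑ n ∈ Finset.range (M+1), fM M n := by
      apply tsum_eq_sum
      intro n hn
      simp only [Finset.mem_range, not_lt] at hn
      simp only [hfMdef]
      rw [if_neg (by omega)]
    rw [h1', durfee h0 h1 (M+M) M M k (le_refl _), min_self]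
    apply Finset.sum_congr rfl
    intro n hn
    simp only [Finset.mem_range] at hn
    simp only [hfMdef]
    rw [if_pos (by omega)]
  have hgb_le : ∀ a b : ℕ, gb x a b ≤ 1/(c*c) := by
    intro a b
    rw [gb_eq h0 h1]
    refine div_le_div₀ zero_le_one (P_le_one h0 h1 _) (mul_pos hc0 hc0) ?_
    exact mul_le_mul (hc a) (hc b) hc0.le (P_pos h0 h1 a).le
  have hfM_nonneg : ∀ M n, 0 ≤ fM M n := by
    intro M n
    simp only [hfMdef]
    split
    · have := gb_nonneg h0 h1 n (M-n)
      have := gb_nonneg h0 h1 (M-n) (n+k)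
      positivity
    · exact le_refl 0
  have hbound : ∀ M n, ‖fM M n‖ ≤ g n := by
    intro M n
    rw [Real.norm_eq_abs, abs_of_nonneg (hfM_nonneg M n)]
    have hgn : 0 ≤ g n := by
      simp only [hgdef]
      positivity
    simp only [hfMdef]
    by_cases hn : n ≤ M
    · rw [if_pos hn]
      have hpow : x^(n*(n+k)) ≤ x^n := by
        apply pow_le_pow_of_le_one h0.le h1.le
        rcases Nat.eq_zero_or_pos n with h | h
        · simp [h]
        · exact Nat.le_mul_of_pos_right n (by omega)
      simp only [hgdef]
      have g1 := gb_nonneg h0 h1 n (M-n)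
      have g2 := gb_nonneg h0 h1 (M-n) (n+k)
      have b1 := hgb_le n (M-n)
      have b2 := hgb_le (M-n) (n+k)
      have hcc : (0:ℝ) ≤ 1/(c*c) := by positivity
      apply mul_le_mul (mul_le_mul hpow b1 g1 (pow_nonneg h0.le n)) b2 g2
      exact mul_nonneg (pow_nonneg h0.le n) hcc
    · rw [if_neg hn]
      exact hgn
  have hpt : ∀ n, Tendsto (fun M => fM M n) atTop (𝓝 (gl n)) := by
    intro n
    have hev : (fun M : ℕ => x^(n*(n+k)) * (qPoch x x M / (qPoch x x n * qPoch x x (M-n)))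
        * (qPoch x x (M+k) / (qPoch x x (M-n) * qPoch x x (n+k))))
        =ᶠ[atTop] (fun M => fM M n) := by
      filter_upwards [eventually_ge_atTop n] with M hM
      simp only [hfMdef]
      rw [if_pos hM, gb_eq h0 h1 n (M-n), gb_eq h0 h1 (M-n) (n+k),
        show n+(M-n) = M by omega, show (M-n)+(n+k) = M+k by omega]
    have hA : Tendsto (fun M : ℕ => qPoch x x M / (qPoch x x n * qPoch x x (M-n)))
        atTop (𝓝 (Pinf / (qPoch x x n * Pinf))) :=
      Tendsto.div htend (Tendsto.mul tendsto_const_nhds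
        (htend.comp (tendsto_sub_atTop_nat n)))
        (mul_pos (P_pos h0 h1 n) hPinf0).ne'
    have hB : Tendsto (fun M : ℕ => qPoch x x (M+k) / (qPoch x x (M-n) * qPoch x x (n+k)))
        atTop (𝓝 (Pinf / (Pinf * qPoch x x (n+k)))) :=
      Tendsto.div (htend.comp (tendsto_add_atTop_nat k))
        (Tendsto.mul (htend.comp (tendsto_sub_atTop_nat n)) tendsto_const_nhds)
        (mul_pos hPinf0 (P_pos h0 h1 (n+k))).ne'
    have hlim := (tendsto_const_nhds (x := x^(n*(n+k))).mul hA).mul hB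
    have heq : x^(n*(n+k)) * (Pinf / (qPoch x x n * Pinf)) * (Pinf / (Pinf * qPoch x x (n+k)))
        = gl n := by
      simp only [hgldef]
      field_simp [hPinf0.ne', (P_pos h0 h1 n).ne', (P_pos h0 h1 (n+k)).ne']
    exact Tendsto.congr' hev (heq ▸ hlim)
  have hFlim2 : Tendsto (fun M => gb x M (M+k)) atTop (𝓝 (∑' n, gl n)) := by
    have h := tendsto_tsum_of_dominated_convergence hg_sum hpt
      (Filter.Eventually.of_forall hbound)
    exact h.congr (fun M => (hFM M).symm)
  have hFlim1 : Tendsto (fun M => gb x M (M+k)) atTop (𝓝 (Pinf / (Pinf * Pinf))) := by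
    have hnum : Tendsto (fun M : ℕ => qPoch x x (M+(M+k))) atTop (𝓝 Pinf) :=
      htend.comp (tendsto_atTop_mono (fun M => Nat.le_add_right M (M+k)) tendsto_id)
    have hden : Tendsto (fun M : ℕ => qPoch x x M * qPoch x x (M+k)) atTop
        (𝓝 (Pinf * Pinf)) := htend.mul (htend.comp (tendsto_add_atTop_nat k))
    have h := hnum.div hden (mul_pos hPinf0 hPinf0).ne'
    exact h.congr (fun M => (gb_eq h0 h1 M (M+k)).symm)
  have hmain : Pinf / (Pinf * Pinf) = ∑' n, gl n := tendsto_nhds_unique hFlim1 hFlim2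
  have hgl_le : ∀ n, gl n ≤ g n := fun n =>
    le_of_tendsto (hpt n) (Filter.Eventually.of_forall fun M =>
      le_trans (le_abs_self _) (hbound M n))
  have hgl_nonneg : ∀ n, 0 ≤ gl n := fun n =>
    ge_of_tendsto (hpt n) (Filter.Eventually.of_forall fun M => hfM_nonneg M n)
  have hgl_sum : Summable gl := Summable.of_nonneg_of_le hgl_nonneg hgl_le hg_sum
  have hfun : (fun n : ℕ => x ^ (n^2 + k*n) / (qPoch x x n * qPoch x x (n+k))) = gl := by
    funext n
    simp only [hgldef]
    rw [show n^2 + k*n = n*(n+k) by ring, div_eq_mul_inv, mul_inv]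
    ring
  constructor
  · rw [hfun]; exact hgl_sum
  · rw [hfun, ← hmain]
    field_simp
end Stmt17

namespace Stmt17

lemma qPoch_neg_pos (h0 : 0 < x) (m : ℕ) : 0 < qPoch (-x) x m := by
  apply Finset.prod_pos
  intro j _
  have : 0 < x * x^j := by positivity
  nlinarith

lemma qPoch_sq (m : ℕ) : qPoch (x^2) (x^2) m = qPoch x x m * qPoch (-x) x m := by
  rw [qPoch, qPoch, qPoch, ← Finset.prod_mul_distrib]
  apply Finset.prod_congr rfl
  intro j _
  have h : (x^2)^j = (x^j)^2 := by rw [← pow_mul, mul_comm, pow_mul]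
  rw [h]
  ring

lemma series2_eq (h0 : 0 < x) (h1 : x < 1) (k : ℕ) :
    (fun n : ℕ => qPoch (-x) x n * qPoch (-x) x (n+k) * x^(n^2+k*n)
      / (qPoch (x^2) (x^2) n * qPoch (x^2) (x^2) (n+k)))
    = fun n : ℕ => x^(n^2+k*n) / (qPoch x x n * qPoch x x (n+k)) := by
  funext n
  rw [qPoch_sq, qPoch_sq]
  have a1 := (qPoch_neg_pos h0 n).ne'
  have a2 := (qPoch_neg_pos h0 (n+k)).ne'
  have a3 := (P_pos h0 h1 n).ne'
  have a4 := (P_pos h0 h1 (n+k)).ne'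
  field_simp

end Stmt17

/-- Durfee rectangle identities: for `0 < x < 1` and `k ∈ ℕ`,
`1/∏_{n≥1}(1-x^n) = ∑_{n≥0} x^{n²+kn}/((x;x)_n (x;x)_{n+k})
                  = ∑_{n≥0} (−x;x)_n (−x;x)_{n+k} x^{n²+kn}/((x²;x²)_n (x²;x²)_{n+k})`,
with absolute convergence of the product and both series. -/
theorem stmt_17 (k : ℕ) (x : ℝ) (h0 : 0 < x) (h1 : x < 1) :
    Multipliable (fun n : ℕ => 1 - x ^ (n + 1))
      ∧ Summable (fun n : ℕ =>
          x ^ (n ^ 2 + k * n) / (qPoch x x n * qPoch x x (n + k)))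
      ∧ Summable (fun n : ℕ =>
          qPoch (-x) x n * qPoch (-x) x (n + k) * x ^ (n ^ 2 + k * n)
            / (qPoch (x ^ 2) (x ^ 2) n * qPoch (x ^ 2) (x ^ 2) (n + k)))
      ∧ 1 / (∏' n : ℕ, (1 - x ^ (n + 1)))
          = ∑' n : ℕ, x ^ (n ^ 2 + k * n) / (qPoch x x n * qPoch x x (n + k))
      ∧ 1 / (∏' n : ℕ, (1 - x ^ (n + 1)))
          = ∑' n : ℕ, qPoch (-x) x n * qPoch (-x) x (n + k) * x ^ (n ^ 2 + k * n)
              / (qPoch (x ^ 2) (x ^ 2) n * qPoch (x ^ 2) (x ^ 2) (n + k)) := by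
  obtain ⟨hsum, heq⟩ := Stmt17.key h0 h1 k
  have h2eq := Stmt17.series2_eq h0 h1 k
  exact ⟨Stmt17.mult_one_sub h0 h1, hsum, by rw [h2eq]; exact hsum, heq,
    by rw [h2eq]; exact heq⟩
end
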